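/- arXiv:0707.0102 — 8 statements merged into one kernel-verified Lean document; each statement's English description precedes it below -/
import Mathlib

section
/- Let (X,d) be a metric space and suppose that for all N, all points x₁,…,x_N ∈ X, all y ∈ X, and all weights aᵢ ∈ [0,1] with Σaᵢ=1, Σ_{i,j} aᵢaⱼ( d(xᵢ,xⱼ)² − d(xᵢ,y)² − d(xⱼ,y)² ) ≤ 0 holds. Fix N, points x₁,…,x_N ∈ X, a probability vector (πᵢ), and a stochastic matrix A = (a_{ij}) with π-reversibility πᵢa_{ij} = πⱼa_{ji}. Define ℰ(l) := Σ_{i,j} πᵢ a^{(l)}_{ij} d(xᵢ,xⱼ)², where A^l = (a^{(l)}_{ij}). Then for every l ∈ ℕ, ℰ(2l) ≤ 2ℰ(l). -/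
open Finset

/-- In a metric space satisfying Sturm's inequality, the Markov-chain energy
`ℰ(l) = ∑ᵢⱼ πᵢ a⁽ˡ⁾ᵢⱼ d(xᵢ,xⱼ)²` satisfies the doubling estimate `ℰ(2l) ≤ 2 ℰ(l)`. -/
theorem stmt1 {X : Type*} [MetricSpace X]
    (hsturm : ∀ (N : ℕ) (x : Fin N → X) (y : X) (a : Fin N → ℝ),
      (∀ i, 0 ≤ a i) → (∀ i, a i ≤ 1) → ∑ i, a i = 1 →
      ∑ i, ∑ j, a i * a j *
        (dist (x i) (x j) ^ 2 - dist (x i) y ^ 2 - dist (x j) y ^ 2) ≤ 0)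
    (N : ℕ) (x : Fin N → X) (p : Fin N → ℝ) (A : Matrix (Fin N) (Fin N) ℝ)
    (hp0 : ∀ i, 0 ≤ p i) (hp1 : ∀ i, p i ≤ 1) (hpsum : ∑ i, p i = 1)
    (hA0 : ∀ i j, 0 ≤ A i j) (hA1 : ∀ i j, A i j ≤ 1)
    (hrow : ∀ i, ∑ j, A i j = 1)
    (hrev : ∀ i j, p i * A i j = p j * A j i) :
    ∀ l : ℕ,
      ∑ i, ∑ j, p i * (A ^ (2 * l)) i j * dist (x i) (x j) ^ 2 ≤
        2 * ∑ i, ∑ j, p i * (A ^ l) i j * dist (x i) (x j) ^ 2 := by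
  -- Powers of A are nonnegative
  have hB0 : ∀ (l : ℕ) (i j : Fin N), 0 ≤ (A ^ l) i j := by
    intro l
    induction l with
    | zero =>
      intro i j
      simp [Matrix.one_apply]
      split <;> norm_num
    | succ l ih =>
      intro i j
      rw [pow_succ, Matrix.mul_apply]
      exact Finset.sum_nonneg fun k _ => mul_nonneg (ih i k) (hA0 k j)
  -- Powers of A are row-stochastic
  have hBrow : ∀ (l : ℕ) (i : Fin N), ∑ j, (A ^ l) i j = 1 := by
    intro l
    induction l with
    | zero => intro i; simp [Matrix.one_apply]
    | succ l ih =>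
      intro i
      simp only [pow_succ, Matrix.mul_apply]
      rw [Finset.sum_comm]
      calc ∑ k, ∑ j, (A ^ l) i k * A k j
          = ∑ k, (A ^ l) i k * ∑ j, A k j := by
            refine Finset.sum_congr rfl fun k _ => ?_
            rw [Finset.mul_sum]
        _ = ∑ k, (A ^ l) i k := by
            refine Finset.sum_congr rfl fun k _ => ?_
            rw [hrow k, mul_one]
        _ = 1 := ih i
  -- Powers of A are reversible w.r.t. p
  have hBrev : ∀ (l : ℕ) (i j : Fin N), p i * (A ^ l) i j = p j * (A ^ l) j i := by
    intro l
    induction l with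
    | zero =>
      intro i j
      by_cases h : i = j
      · subst h; rfl
      · simp [Matrix.one_apply_ne h, Matrix.one_apply_ne (Ne.symm h)]
    | succ l ih =>
      intro i j
      rw [pow_succ]
      have hcomm : A ^ l * A = A * A ^ l := by rw [← pow_succ, ← pow_succ']
      conv_rhs => rw [hcomm]
      rw [Matrix.mul_apply, Matrix.mul_apply, Finset.mul_sum, Finset.mul_sum]
      refine Finset.sum_congr rfl fun k _ => ?_
      -- p i * ((A^l) i k * A k j) = p j * (A j k * (A^l) k i)
      have h1 : p i * (A ^ l) i k = p k * (A ^ l) k i := ih i k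
      have h2 : p k * A k j = p j * A j k := hrev k j
      calc p i * ((A ^ l) i k * A k j) = (p i * (A ^ l) i k) * A k j := by ring
        _ = (p k * (A ^ l) k i) * A k j := by rw [h1]
        _ = (p k * A k j) * (A ^ l) k i := by ring
        _ = (p j * A j k) * (A ^ l) k i := by rw [h2]
        _ = p j * (A j k * (A ^ l) k i) := by ring
  intro l
  set B := A ^ l with hBdef
  have hB1 : ∀ m j, B m j ≤ 1 := by
    intro m j
    calc B m j ≤ ∑ j', B m j' :=
          Finset.single_le_sum (fun k _ => hB0 l m k) (Finset.mem_univ j)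
      _ = 1 := hBrow l m
  have key : ∀ m, ∑ j, ∑ k, B m j * B m k *
      (dist (x j) (x k) ^ 2 - dist (x j) (x m) ^ 2 - dist (x k) (x m) ^ 2) ≤ 0 :=
    fun m => hsturm N x (x m) (fun j => B m j) (fun j => hB0 l m j) (hB1 m) (hBrow l m)
  have main : ∑ m, p m * (∑ j, ∑ k, B m j * B m k *
      (dist (x j) (x k) ^ 2 - dist (x j) (x m) ^ 2 - dist (x k) (x m) ^ 2)) ≤ 0 :=
    Finset.sum_nonpos fun m _ => mul_nonpos_iff.mpr (Or.inl ⟨hp0 m, key m⟩)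
  -- Identify the sum with ℰ(2l) - 2ℰ(l)
  have expand : ∑ m, p m * (∑ j, ∑ k, B m j * B m k *
      (dist (x j) (x k) ^ 2 - dist (x j) (x m) ^ 2 - dist (x k) (x m) ^ 2))
      = (∑ i, ∑ j, p i * (A ^ (2 * l)) i j * dist (x i) (x j) ^ 2)
        - 2 * ∑ i, ∑ j, p i * B i j * dist (x i) (x j) ^ 2 := by
    have split : ∀ m, p m * (∑ j, ∑ k, B m j * B m k *
        (dist (x j) (x k) ^ 2 - dist (x j) (x m) ^ 2 - dist (x k) (x m) ^ 2))
        = (∑ j, ∑ k, p m * B m j * B m k * dist (x j) (x k) ^ 2)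
          - (∑ j, ∑ k, p m * B m j * B m k * dist (x j) (x m) ^ 2)
          - (∑ j, ∑ k, p m * B m j * B m k * dist (x k) (x m) ^ 2) := by
      intro m
      rw [Finset.mul_sum, ← Finset.sum_sub_distrib, ← Finset.sum_sub_distrib]
      refine Finset.sum_congr rfl fun j _ => ?_
      rw [Finset.mul_sum, ← Finset.sum_sub_distrib, ← Finset.sum_sub_distrib]
      refine Finset.sum_congr rfl fun k _ => ?_
      ring
    rw [Finset.sum_congr rfl fun m _ => split m]
    rw [Finset.sum_sub_distrib, Finset.sum_sub_distrib]
    have hT1 : ∑ m, ∑ j, ∑ k, p m * B m j * B m k * dist (x j) (x k) ^ 2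
        = ∑ i, ∑ j, p i * (A ^ (2 * l)) i j * dist (x i) (x j) ^ 2 := by
      rw [Finset.sum_comm]
      refine Finset.sum_congr rfl fun j _ => ?_
      rw [Finset.sum_comm]
      refine Finset.sum_congr rfl fun k _ => ?_
      have hpow : (A ^ (2 * l)) j k = ∑ m, B j m * B m k := by
        rw [two_mul, pow_add, Matrix.mul_apply]
      rw [hpow, Finset.mul_sum, Finset.sum_mul]
      refine Finset.sum_congr rfl fun m _ => ?_
      have h1 : p m * B m j = p j * B j m := hBrev l m j
      calc p m * B m j * B m k * dist (x j) (x k) ^ 2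
          = (p m * B m j) * (B m k * dist (x j) (x k) ^ 2) := by ring
        _ = (p j * B j m) * (B m k * dist (x j) (x k) ^ 2) := by rw [h1]
        _ = p j * (B j m * B m k) * dist (x j) (x k) ^ 2 := by ring
    have hT2 : ∑ m, ∑ j, ∑ k, p m * B m j * B m k * dist (x j) (x m) ^ 2
        = ∑ i, ∑ j, p i * B i j * dist (x i) (x j) ^ 2 := by
      refine Finset.sum_congr rfl fun m _ => ?_
      refine Finset.sum_congr rfl fun j _ => ?_
      have : ∑ k, p m * B m j * B m k * dist (x j) (x m) ^ 2
          = (p m * B m j * dist (x j) (x m) ^ 2) * ∑ k, B m k := by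
        rw [Finset.mul_sum]
        exact Finset.sum_congr rfl fun k _ => by ring
      rw [this, hBrow l m, mul_one, dist_comm (x j) (x m)]
    have hT3 : ∑ m, ∑ j, ∑ k, p m * B m j * B m k * dist (x k) (x m) ^ 2
        = ∑ i, ∑ j, p i * B i j * dist (x i) (x j) ^ 2 := by
      refine Finset.sum_congr rfl fun m _ => ?_
      rw [Finset.sum_comm]
      refine Finset.sum_congr rfl fun k _ => ?_
      have : ∑ j, p m * B m j * B m k * dist (x k) (x m) ^ 2
          = (p m * B m k * dist (x k) (x m) ^ 2) * ∑ j, B m j := by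
        rw [Finset.mul_sum]
        exact Finset.sum_congr rfl fun j _ => by ring
      rw [this, hBrow l m, mul_one, dist_comm (x k) (x m)]
    rw [hT1, hT2, hT3]
    ring
  linarith [main, expand.symm.trans_le main]
end

section
/- Let (X,d) be a metric space, x₁,…,x_N ∈ X, (πᵢ) a probability vector, and A a π-reversible row-stochastic matrix. Define ℰ(l) := Σ_{i,j} πᵢ a^{(l)}_{ij} d(xᵢ,xⱼ)². Then for all l,m ∈ ℕ, √ℰ(l+m) ≤ √ℰ(l) + √ℰ(m). -/
open Finset

/-- Subadditivity of the square root of the Markov-chain energy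
`ℰ(l) = ∑ᵢⱼ πᵢ a⁽ˡ⁾ᵢⱼ d(xᵢ,xⱼ)²` for a reversible chain in any metric space. -/
theorem stmt3 {X : Type*} [MetricSpace X]
    (N : ℕ) (x : Fin N → X) (p : Fin N → ℝ) (A : Matrix (Fin N) (Fin N) ℝ)
    (hp0 : ∀ i, 0 ≤ p i) (hp1 : ∀ i, p i ≤ 1) (hpsum : ∑ i, p i = 1)
    (hA0 : ∀ i j, 0 ≤ A i j) (hA1 : ∀ i j, A i j ≤ 1)
    (hrow : ∀ i, ∑ j, A i j = 1)
    (hrev : ∀ i j, p i * A i j = p j * A j i) :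
    ∀ l m : ℕ,
      Real.sqrt (∑ i, ∑ j, p i * (A ^ (l + m)) i j * dist (x i) (x j) ^ 2) ≤
        Real.sqrt (∑ i, ∑ j, p i * (A ^ l) i j * dist (x i) (x j) ^ 2) +
          Real.sqrt (∑ i, ∑ j, p i * (A ^ m) i j * dist (x i) (x j) ^ 2) := by
  -- entries of powers are nonnegative
  have hAl0 : ∀ l i j, 0 ≤ (A ^ l) i j := by
    intro l
    induction l with
    | zero =>
        intro i j
        by_cases h : i = j <;> simp [Matrix.one_apply, h]
    | succ n ih =>
        intro i j
        rw [pow_succ, Matrix.mul_apply]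
        exact Finset.sum_nonneg fun k _ => mul_nonneg (ih i k) (hA0 k j)
  -- rows of powers sum to 1
  have hrowl : ∀ l i, ∑ j, (A ^ l) i j = 1 := by
    intro l
    induction l with
    | zero => intro i; simp [Matrix.one_apply]
    | succ n ih =>
        intro i
        simp_rw [pow_succ, Matrix.mul_apply]
        rw [Finset.sum_comm]
        simp_rw [← Finset.mul_sum, hrow, mul_one]
        exact ih i
  -- reversibility of powers
  have hrevl : ∀ l i j, p i * (A ^ l) i j = p j * (A ^ l) j i := by
    intro l
    induction l with
    | zero =>
        intro i j
        by_cases h : i = j <;> simp [Matrix.one_apply, h, eq_comm]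
    | succ n ih =>
        intro i j
        conv_rhs => rw [pow_succ', Matrix.mul_apply, Finset.mul_sum]
        rw [pow_succ, Matrix.mul_apply, Finset.mul_sum]
        refine Finset.sum_congr rfl fun k _ => ?_
        calc p i * ((A ^ n) i k * A k j)
            = (p i * (A ^ n) i k) * A k j := by ring
          _ = (p k * (A ^ n) k i) * A k j := by rw [ih i k]
          _ = (A ^ n) k i * (p k * A k j) := by ring
          _ = (A ^ n) k i * (p j * A j k) := by rw [hrev k j]
          _ = p j * (A j k * (A ^ n) k i) := by ring
  -- column sums weighted by p
  have hcol : ∀ l k, ∑ i, p i * (A ^ l) i k = p k := by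
    intro l k
    simp_rw [fun i => hrevl l i k, ← Finset.mul_sum, hrowl l k, mul_one]
  set E : ℕ → ℝ := fun l => ∑ i, ∑ j, p i * (A ^ l) i j * dist (x i) (x j) ^ 2 with hEdef
  have hE0 : ∀ l, 0 ≤ E l := fun l =>
    Finset.sum_nonneg fun i _ => Finset.sum_nonneg fun j _ =>
      mul_nonneg (mul_nonneg (hp0 i) (hAl0 l i j)) (sq_nonneg _)
  intro l m
  show Real.sqrt (E (l + m)) ≤ Real.sqrt (E l) + Real.sqrt (E m)
  -- set up the triple sum
  set W : Fin N × Fin N × Fin N → ℝ :=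
    fun t => p t.1 * (A ^ l) t.1 t.2.1 * (A ^ m) t.2.1 t.2.2 with hWdef
  have hW0 : ∀ t, 0 ≤ W t := fun t =>
    mul_nonneg (mul_nonneg (hp0 _) (hAl0 _ _ _)) (hAl0 _ _ _)
  set a : Fin N × Fin N × Fin N → ℝ := fun t => dist (x t.1) (x t.2.1) with hadef
  set b : Fin N × Fin N × Fin N → ℝ := fun t => dist (x t.2.1) (x t.2.2) with hbdef
  have hElm : E (l + m) = ∑ t : Fin N × Fin N × Fin N, W t * dist (x t.1) (x t.2.2) ^ 2 := by
    rw [Fintype.sum_prod_type]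
    simp_rw [Fintype.sum_prod_type, hEdef, hWdef, pow_add, Matrix.mul_apply,
      Finset.mul_sum, Finset.sum_mul]
    rw [Finset.sum_congr rfl fun i _ => Finset.sum_comm]
    exact Finset.sum_congr rfl fun i _ => Finset.sum_congr rfl fun k _ =>
      Finset.sum_congr rfl fun j _ => by ring
  have hEl : ∑ t : Fin N × Fin N × Fin N, W t * a t ^ 2 = E l := by
    rw [Fintype.sum_prod_type]
    simp_rw [Fintype.sum_prod_type, hWdef, hadef]
    refine Finset.sum_congr rfl fun i _ => Finset.sum_congr rfl fun k _ => ?_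
    calc ∑ j, p i * (A ^ l) i k * (A ^ m) k j * dist (x i) (x k) ^ 2
        = (p i * (A ^ l) i k * dist (x i) (x k) ^ 2) * ∑ j, (A ^ m) k j := by
          rw [Finset.mul_sum]; exact Finset.sum_congr rfl fun j _ => by ring
      _ = p i * (A ^ l) i k * dist (x i) (x k) ^ 2 := by rw [hrowl m k, mul_one]
  have hEm : ∑ t : Fin N × Fin N × Fin N, W t * b t ^ 2 = E m := by
    have hre : ∑ t : Fin N × Fin N × Fin N, W t * b t ^ 2
        = ∑ k, ∑ j, ∑ i, p i * (A ^ l) i k * (A ^ m) k j * dist (x k) (x j) ^ 2 := by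
      rw [Fintype.sum_prod_type]
      simp_rw [Fintype.sum_prod_type, hWdef, hbdef]
      rw [Finset.sum_comm]
      exact Finset.sum_congr rfl fun k _ => Finset.sum_comm
    rw [hre]
    refine Finset.sum_congr rfl fun k _ => Finset.sum_congr rfl fun j _ => ?_
    calc ∑ i, p i * (A ^ l) i k * (A ^ m) k j * dist (x k) (x j) ^ 2
        = (∑ i, p i * (A ^ l) i k) * ((A ^ m) k j * dist (x k) (x j) ^ 2) := by
          rw [Finset.sum_mul]; exact Finset.sum_congr rfl fun i _ => by ring
      _ = p k * (A ^ m) k j * dist (x k) (x j) ^ 2 := by rw [hcol l k]; ring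
  -- Cauchy–Schwarz for the cross term
  have hCS : ∑ t : Fin N × Fin N × Fin N, W t * (a t * b t) ≤
      Real.sqrt (E l) * Real.sqrt (E m) := by
    have h := Real.sum_mul_le_sqrt_mul_sqrt Finset.univ
      (fun t : Fin N × Fin N × Fin N => Real.sqrt (W t) * a t)
      (fun t => Real.sqrt (W t) * b t)
    have key1 : ∀ t : Fin N × Fin N × Fin N,
        (Real.sqrt (W t) * a t) * (Real.sqrt (W t) * b t) = W t * (a t * b t) := fun t => by
      rw [show (Real.sqrt (W t) * a t) * (Real.sqrt (W t) * b t)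
          = (Real.sqrt (W t) * Real.sqrt (W t)) * (a t * b t) by ring,
        Real.mul_self_sqrt (hW0 t)]
    have key2 : ∀ t : Fin N × Fin N × Fin N,
        (Real.sqrt (W t) * a t) ^ 2 = W t * a t ^ 2 := fun t => by
      rw [mul_pow, Real.sq_sqrt (hW0 t)]
    have key3 : ∀ t : Fin N × Fin N × Fin N,
        (Real.sqrt (W t) * b t) ^ 2 = W t * b t ^ 2 := fun t => by
      rw [mul_pow, Real.sq_sqrt (hW0 t)]
    simp_rw [key1, key2, key3] at h
    rwa [hEl, hEm] at h
  have key : E (l + m) ≤ (Real.sqrt (E l) + Real.sqrt (E m)) ^ 2 := by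
    have tri : E (l + m) ≤ ∑ t : Fin N × Fin N × Fin N, W t * (a t + b t) ^ 2 := by
      rw [hElm]
      refine Finset.sum_le_sum fun t _ => ?_
      refine mul_le_mul_of_nonneg_left ?_ (hW0 t)
      have htri : dist (x t.1) (x t.2.2) ≤ a t + b t := dist_triangle _ _ _
      exact pow_le_pow_left₀ dist_nonneg htri 2
    have expand : ∑ t : Fin N × Fin N × Fin N, W t * (a t + b t) ^ 2 =
        E l + 2 * (∑ t : Fin N × Fin N × Fin N, W t * (a t * b t)) + E m := by
      rw [← hEl, ← hEm, Finset.mul_sum, ← Finset.sum_add_distrib, ← Finset.sum_add_distrib]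
      exact Finset.sum_congr rfl fun t _ => by ring
    calc E (l + m) ≤ E l + 2 * (∑ t : Fin N × Fin N × Fin N, W t * (a t * b t)) + E m := by
          rw [← expand]; exact tri
      _ ≤ E l + 2 * (Real.sqrt (E l) * Real.sqrt (E m)) + E m := by linarith [hCS]
      _ = (Real.sqrt (E l) + Real.sqrt (E m)) ^ 2 := by
          rw [add_sq, Real.sq_sqrt (hE0 l), Real.sq_sqrt (hE0 m)]; ring
  calc Real.sqrt (E (l + m)) ≤ Real.sqrt ((Real.sqrt (E l) + Real.sqrt (E m)) ^ 2) :=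
        Real.sqrt_le_sqrt key
    _ = Real.sqrt (E l) + Real.sqrt (E m) :=
        Real.sqrt_sq (by positivity)
end

section
/- Let ℰ : ℕ → [0,∞) satisfy: (a) √ℰ(l+m) ≤ √ℰ(l) + √ℰ(m) for all l,m ≥ 1, and (b) ℰ(2l) ≤ 2ℰ(l) for all l ≥ 1. Then for every l ≥ 1, ℰ(l) ≤ (1+√2)² · l · ℰ(1). -/
/-- Key real inequality: for `0 < s ≤ a`, `√a + (1+√2)√s ≤ (1+√2)√(a+s)`. -/
lemma stmt4_key (a s : ℝ) (ha : 0 < a) (hs : 0 < s) (hsa : s ≤ a) :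
    Real.sqrt a + (1 + Real.sqrt 2) * Real.sqrt s
      ≤ (1 + Real.sqrt 2) * Real.sqrt (a + s) := by
  have hA := Real.sq_sqrt ha.le
  have hS := Real.sq_sqrt hs.le
  have hAS := Real.sq_sqrt (by linarith : (0:ℝ) ≤ a + s)
  have n1 := Real.sqrt_nonneg a
  have n2 := Real.sqrt_nonneg s
  have n3 := Real.sqrt_nonneg (a + s)
  have n4 := Real.sqrt_nonneg 2
  have h2 := Real.sq_sqrt (by norm_num : (0:ℝ) ≤ 2)
  have hss : Real.sqrt s ≤ Real.sqrt a := Real.sqrt_le_sqrt hsa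
  have h2a : Real.sqrt (a + s) ≤ Real.sqrt 2 * Real.sqrt a := by
    rw [← Real.sqrt_mul (by norm_num)]
    exact Real.sqrt_le_sqrt (by linarith)
  have hSpos : 0 < Real.sqrt s := Real.sqrt_pos.mpr hs
  have hsum : 0 < Real.sqrt (a + s) + Real.sqrt s := by linarith
  have hbound : Real.sqrt (a + s) + Real.sqrt s ≤ (1 + Real.sqrt 2) * Real.sqrt a := by
    nlinarith
  have hprod : 0 ≤ ((1 + Real.sqrt 2) * Real.sqrt (a + s)
      - (1 + Real.sqrt 2) * Real.sqrt s - Real.sqrt a)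
      * (Real.sqrt (a + s) + Real.sqrt s) := by
    nlinarith [mul_le_mul_of_nonneg_left hbound n1]
  nlinarith [hprod, hsum]

/-- The abstract numerical induction: if `ℰ` is subadditive in the square-root sense and
satisfies the doubling bound `ℰ(2l) ≤ 2ℰ(l)`, then `ℰ(l) ≤ (1+√2)² l ℰ(1)`. -/
theorem stmt4 (E : ℕ → ℝ) (hE0 : ∀ l, 0 ≤ E l)
    (hsub : ∀ l m : ℕ, 1 ≤ l → 1 ≤ m →
      Real.sqrt (E (l + m)) ≤ Real.sqrt (E l) + Real.sqrt (E m))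
    (hdouble : ∀ l : ℕ, 1 ≤ l → E (2 * l) ≤ 2 * E l) :
    ∀ l : ℕ, 1 ≤ l → E l ≤ (1 + Real.sqrt 2) ^ 2 * l * E 1 := by
  have hc1 : (1:ℝ) ≤ 1 + Real.sqrt 2 := by
    have := Real.sqrt_nonneg 2; linarith
  -- doubling along powers of 2
  have hpow : ∀ n : ℕ, E (2 ^ n) ≤ (2:ℝ) ^ n * E 1 := by
    intro n
    induction n with
    | zero => simp
    | succ n ih =>
      have h2 : (1:ℕ) ≤ 2 ^ n := Nat.one_le_two_pow
      have hd := hdouble (2 ^ n) h2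
      have : (2 : ℕ) ^ (n + 1) = 2 * 2 ^ n := by ring
      rw [this]
      calc E (2 * 2 ^ n) ≤ 2 * E (2 ^ n) := hd
        _ ≤ 2 * ((2:ℝ) ^ n * E 1) := by linarith
        _ = (2:ℝ) ^ (n + 1) * E 1 := by ring
  -- sqrt-form of the claim, by strong induction
  have main : ∀ l : ℕ, 1 ≤ l →
      Real.sqrt (E l) ≤ (1 + Real.sqrt 2) * Real.sqrt l * Real.sqrt (E 1) := by
    intro l
    induction l using Nat.strong_induction_on with
    | _ l ih =>
      intro hl
      rcases eq_or_lt_of_le hl with h1 | h1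
      · -- l = 1
        rw [← h1]
        simp only [Nat.cast_one, Real.sqrt_one, mul_one]
        nlinarith [Real.sqrt_nonneg (E 1), Real.sqrt_nonneg 2]
      · -- l ≥ 2
        set n := Nat.log 2 (l - 1) with hn
        have hln : 2 ^ n ≤ l - 1 := Nat.pow_log_le_self 2 (by omega)
        have hlt : l - 1 < 2 ^ (n + 1) := Nat.lt_pow_succ_log_self (by norm_num) _
        have h2n1 : (2:ℕ) ^ (n + 1) = 2 * 2 ^ n := by ring
        set s := l - 2 ^ n with hs
        have hpn : (1:ℕ) ≤ 2 ^ n := Nat.one_le_two_pow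
        have hs1 : 1 ≤ s := by omega
        have hs2 : s ≤ 2 ^ n := by omega
        have hls : l = 2 ^ n + s := by omega
        have hslt : s < l := by omega
        -- bound on E (2^n)
        have hb1 : Real.sqrt (E (2 ^ n)) ≤ Real.sqrt ((2:ℝ) ^ n) * Real.sqrt (E 1) := by
          rw [← Real.sqrt_mul (by positivity)]
          exact Real.sqrt_le_sqrt (hpow n)
        have hb2 := ih s hslt hs1
        have hsubl : Real.sqrt (E l) ≤ Real.sqrt (E (2 ^ n)) + Real.sqrt (E s) := by
          rw [hls]; exact hsub _ _ hpn hs1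
        have hE1 : (0:ℝ) ≤ Real.sqrt (E 1) := Real.sqrt_nonneg _
        have hkey := stmt4_key ((2:ℝ) ^ n) (s : ℝ) (by positivity)
          (by exact_mod_cast Nat.cast_pos.mpr (by omega : 0 < s))
          (by exact_mod_cast hs2)
        have hcast : ((l : ℝ)) = (2:ℝ) ^ n + (s : ℝ) := by
          rw [hls]; push_cast; ring
        calc Real.sqrt (E l) ≤ Real.sqrt (E (2 ^ n)) + Real.sqrt (E s) := hsubl
          _ ≤ Real.sqrt ((2:ℝ) ^ n) * Real.sqrt (E 1)
              + (1 + Real.sqrt 2) * Real.sqrt s * Real.sqrt (E 1) := by linarith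
          _ = (Real.sqrt ((2:ℝ) ^ n) + (1 + Real.sqrt 2) * Real.sqrt s)
              * Real.sqrt (E 1) := by ring
          _ ≤ ((1 + Real.sqrt 2) * Real.sqrt ((2:ℝ) ^ n + s)) * Real.sqrt (E 1) := by
              exact mul_le_mul_of_nonneg_right hkey hE1
          _ = (1 + Real.sqrt 2) * Real.sqrt l * Real.sqrt (E 1) := by
              rw [hcast]
  intro l hl
  have h := main l hl
  have hnn : (0:ℝ) ≤ (1 + Real.sqrt 2) * Real.sqrt l * Real.sqrt (E 1) := by positivity
  calc E l = Real.sqrt (E l) ^ 2 := (Real.sq_sqrt (hE0 l)).symm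
    _ ≤ ((1 + Real.sqrt 2) * Real.sqrt l * Real.sqrt (E 1)) ^ 2 :=
        pow_le_pow_left₀ (Real.sqrt_nonneg _) h 2
    _ = (1 + Real.sqrt 2) ^ 2 * l * E 1 := by
        rw [mul_pow, mul_pow, Real.sq_sqrt (hE0 1), Real.sq_sqrt (Nat.cast_nonneg l)]
end

section
/- Let (X,d) be a metric space satisfying Sturm's inequality: for all N, x₁,…,x_N ∈ X, y ∈ X and weights aᵢ ∈ [0,1] with Σaᵢ = 1, Σ_{i,j} aᵢaⱼ( d(xᵢ,xⱼ)² − d(xᵢ,y)² − d(xⱼ,y)² ) ≤ 0. Then for every l ∈ ℕ, every N, points x₁,…,x_N ∈ X, probability vector (πᵢ) and π-reversible row-stochastic matrix A = (a_{ij}), one has Σ_{i,j} πᵢ a^{(l)}_{ij} d(xᵢ,xⱼ)² ≤ (1+√2)² · l · Σ_{i,j} πᵢ a_{ij} d(xᵢ,xⱼ)². -/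
open Finset

namespace Stmt6Aux
variable {N : ℕ} (A : Matrix (Fin N) (Fin N) ℝ)

theorem pow_entry_nonneg (hA0 : ∀ i j, 0 ≤ A i j) : ∀ m i j, 0 ≤ (A ^ m) i j := by
  intro m
  induction m with
  | zero => intro i j; rw [pow_zero]; by_cases h : i = j <;> simp [Matrix.one_apply, h]
  | succ n ih =>
    intro i j
    rw [pow_succ, Matrix.mul_apply]
    exact Finset.sum_nonneg fun k _ => mul_nonneg (ih i k) (hA0 k j)

theorem pow_row_sum (hArow : ∀ i, ∑ j, A i j = 1) : ∀ m i, ∑ j, (A ^ m) i j = 1 := by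
  intro m
  induction m with
  | zero => intro i; simp [Matrix.one_apply]
  | succ n ih =>
    intro i
    simp only [pow_succ, Matrix.mul_apply]
    rw [Finset.sum_comm]
    calc ∑ k, ∑ j, (A ^ n) i k * A k j = ∑ k, (A ^ n) i k * ∑ j, A k j := by
          simp [Finset.mul_sum]
      _ = 1 := by simp [hArow, ih]

theorem pow_rev (p : Fin N → ℝ) (hrev : ∀ i j, p i * A i j = p j * A j i) :
    ∀ m i j, p i * (A ^ m) i j = p j * (A ^ m) j i := by
  intro m
  induction m with
  | zero =>
    intro i j
    by_cases h : i = j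
    · subst h; rfl
    · simp [Matrix.one_apply, h, Ne.symm h]
  | succ n ih =>
    intro i j
    conv_lhs => rw [pow_succ]
    conv_rhs => rw [pow_succ']
    rw [Matrix.mul_apply, Matrix.mul_apply, Finset.mul_sum, Finset.mul_sum]
    refine Finset.sum_congr rfl fun k _ => ?_
    calc p i * ((A ^ n) i k * A k j) = (p i * (A ^ n) i k) * A k j := by ring
      _ = (p k * (A ^ n) k i) * A k j := by rw [ih]
      _ = (p k * A k j) * (A ^ n) k i := by ring
      _ = (p j * A j k) * (A ^ n) k i := by rw [hrev]
      _ = p j * (A j k * (A ^ n) k i) := by ring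

theorem pow_stationary (p : Fin N → ℝ) (hrev : ∀ i j, p i * A i j = p j * A j i)
    (hArow : ∀ i, ∑ j, A i j = 1) (m : ℕ) (j : Fin N) :
    ∑ i, p i * (A ^ m) i j = p j := by
  calc ∑ i, p i * (A ^ m) i j = ∑ i, p j * (A ^ m) j i := by
        exact Finset.sum_congr rfl fun i _ => pow_rev A p hrev m i j
    _ = p j * ∑ i, (A ^ m) j i := by rw [Finset.mul_sum]
    _ = p j := by rw [pow_row_sum A hArow m j, mul_one]


variable {X : Type*} [MetricSpace X] {N : ℕ}

noncomputable def En (x : Fin N → X) (p : Fin N → ℝ) (A : Matrix (Fin N) (Fin N) ℝ)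
    (m : ℕ) : ℝ :=
  ∑ i, ∑ j, p i * (A ^ m) i j * dist (x i) (x j) ^ 2

variable (x : Fin N → X) (p : Fin N → ℝ) (A : Matrix (Fin N) (Fin N) ℝ)

theorem En_nonneg (hp0 : ∀ i, 0 ≤ p i) (hA0 : ∀ i j, 0 ≤ A i j) (m : ℕ) :
    0 ≤ En x p A m := by
  refine Finset.sum_nonneg fun i _ => Finset.sum_nonneg fun j _ => ?_
  exact mul_nonneg (mul_nonneg (hp0 i) (pow_entry_nonneg A hA0 m i j)) (sq_nonneg _)

theorem En_zero : En x p A 0 = 0 := by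
  unfold En
  refine Finset.sum_eq_zero fun i _ => Finset.sum_eq_zero fun j _ => ?_
  by_cases h : i = j
  · subst h; simp
  · simp [Matrix.one_apply, h]





theorem En_doubling {X : Type*} [MetricSpace X] {N : ℕ}
    (x : Fin N → X) (p : Fin N → ℝ) (A : Matrix (Fin N) (Fin N) ℝ)
    (hsturm : ∀ (y : X) (a : Fin N → ℝ),
      (∀ i, 0 ≤ a i) → (∀ i, a i ≤ 1) → ∑ i, a i = 1 →
      ∑ i, ∑ j, a i * a j *
        (dist (x i) (x j) ^ 2 - dist (x i) y ^ 2 - dist (x j) y ^ 2) ≤ 0)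
    (hp0 : ∀ i, 0 ≤ p i)
    (hA0 : ∀ i j, 0 ≤ A i j) (hArow : ∀ i, ∑ j, A i j = 1)
    (hrev : ∀ i j, p i * A i j = p j * A j i) (m : ℕ) :
    En x p A (2 * m) ≤ 2 * En x p A m := by
  set B := A ^ m with hB
  have hB0 : ∀ i j, 0 ≤ B i j := pow_entry_nonneg A hA0 m
  have hBrow : ∀ i, ∑ j, B i j = 1 := pow_row_sum A hArow m
  have hB1 : ∀ i j, B i j ≤ 1 := by
    intro i j
    calc B i j ≤ ∑ k, B i k :=
          Finset.single_le_sum (fun k _ => hB0 i k) (mem_univ j)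
      _ = 1 := hBrow i
  have hBrev : ∀ i j, p i * B i j = p j * B j i := pow_rev A p hrev m
  have key : ∀ i : Fin N, ∑ j, ∑ k, B i j * B i k *
      (dist (x j) (x k) ^ 2 - dist (x j) (x i) ^ 2 - dist (x k) (x i) ^ 2) ≤ 0 :=
    fun i => hsturm (x i) (fun j => B i j) (hB0 i) (hB1 i) (hBrow i)
  have key2 : ∑ i, p i * (∑ j, ∑ k, B i j * B i k *
      (dist (x j) (x k) ^ 2 - dist (x j) (x i) ^ 2 - dist (x k) (x i) ^ 2)) ≤ 0 :=
    Finset.sum_nonpos fun i _ => mul_nonpos_iff.2 (Or.inl ⟨hp0 i, key i⟩)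
  -- expand
  have e1 : ∑ i, p i * (∑ j, ∑ k, B i j * B i k *
      (dist (x j) (x k) ^ 2 - dist (x j) (x i) ^ 2 - dist (x k) (x i) ^ 2))
      = (∑ i, ∑ j, ∑ k, p i * B i j * B i k * dist (x j) (x k) ^ 2)
        - (∑ i, ∑ j, ∑ k, p i * B i j * B i k * dist (x j) (x i) ^ 2)
        - (∑ i, ∑ j, ∑ k, p i * B i j * B i k * dist (x k) (x i) ^ 2) := by
    rw [← Finset.sum_sub_distrib, ← Finset.sum_sub_distrib]
    refine Finset.sum_congr rfl fun i _ => ?_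
    rw [Finset.mul_sum, ← Finset.sum_sub_distrib, ← Finset.sum_sub_distrib]
    refine Finset.sum_congr rfl fun j _ => ?_
    rw [Finset.mul_sum, ← Finset.sum_sub_distrib, ← Finset.sum_sub_distrib]
    refine Finset.sum_congr rfl fun k _ => ?_
    ring
  have eT : ∑ i, ∑ j, ∑ k, p i * B i j * B i k * dist (x j) (x k) ^ 2
      = En x p A (2 * m) := by
    rw [Finset.sum_comm]
    have : ∀ j : Fin N, ∑ i, ∑ k, p i * B i j * B i k * dist (x j) (x k) ^ 2
        = ∑ k, p j * (B * B) j k * dist (x j) (x k) ^ 2 := by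
      intro j
      rw [Finset.sum_comm]
      refine Finset.sum_congr rfl fun k _ => ?_
      rw [Matrix.mul_apply, Finset.mul_sum, Finset.sum_mul]
      refine Finset.sum_congr rfl fun i _ => ?_
      calc p i * B i j * B i k * dist (x j) (x k) ^ 2
          = (p i * B i j) * B i k * dist (x j) (x k) ^ 2 := by ring
        _ = (p j * B j i) * B i k * dist (x j) (x k) ^ 2 := by rw [hBrev]
        _ = p j * (B j i * B i k) * dist (x j) (x k) ^ 2 := by ring
    rw [Finset.sum_congr rfl fun j _ => this j]
    unfold En
    rw [two_mul, pow_add]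
  have eR1 : ∑ i, ∑ j, ∑ k, p i * B i j * B i k * dist (x j) (x i) ^ 2
      = En x p A m := by
    unfold En
    refine Finset.sum_congr rfl fun i _ => Finset.sum_congr rfl fun j _ => ?_
    calc ∑ k, p i * B i j * B i k * dist (x j) (x i) ^ 2
        = (p i * B i j * dist (x j) (x i) ^ 2) * ∑ k, B i k := by
          rw [Finset.mul_sum]; exact Finset.sum_congr rfl fun k _ => by ring
      _ = p i * B i j * dist (x i) (x j) ^ 2 := by
          rw [hBrow i, mul_one, dist_comm]
  have eR2 : ∑ i, ∑ j, ∑ k, p i * B i j * B i k * dist (x k) (x i) ^ 2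
      = En x p A m := by
    unfold En
    refine Finset.sum_congr rfl fun i _ => ?_
    rw [Finset.sum_comm]
    refine Finset.sum_congr rfl fun k _ => ?_
    calc ∑ j, p i * B i j * B i k * dist (x k) (x i) ^ 2
        = (p i * B i k * dist (x k) (x i) ^ 2) * ∑ j, B i j := by
          rw [Finset.mul_sum]; exact Finset.sum_congr rfl fun j _ => by ring
      _ = p i * B i k * dist (x i) (x k) ^ 2 := by
          rw [hBrow i, mul_one, dist_comm]
  rw [e1, eT, eR1, eR2] at key2
  linarith


theorem En_c2 (hp0 : ∀ i, 0 ≤ p i)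
    (hA0 : ∀ i j, 0 ≤ A i j) (hArow : ∀ i, ∑ j, A i j = 1)
    (hrev : ∀ i j, p i * A i j = p j * A j i) (m n : ℕ) :
    Real.sqrt (En x p A (m + n)) ≤ Real.sqrt (En x p A m) + Real.sqrt (En x p A n) := by
  set B := A ^ m with hBdef
  set C := A ^ n with hCdef
  have hB0 : ∀ i j, 0 ≤ B i j := pow_entry_nonneg A hA0 m
  have hC0 : ∀ i j, 0 ≤ C i j := pow_entry_nonneg A hA0 n
  have hBrow : ∀ i, ∑ j, B i j = 1 := pow_row_sum A hArow m
  have hCrow : ∀ i, ∑ j, C i j = 1 := pow_row_sum A hArow n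
  set w : Fin N → Fin N → Fin N → ℝ := fun i j k => p i * B i j * C j k with hwdef
  have hw0 : ∀ i j k, 0 ≤ w i j k := fun i j k =>
    mul_nonneg (mul_nonneg (hp0 i) (hB0 i j)) (hC0 j k)
  set d : Fin N → Fin N → ℝ := fun i j => dist (x i) (x j) with hddef
  have expand : En x p A (m + n) = ∑ i, ∑ j, ∑ k, w i j k * d i k ^ 2 := by
    unfold En
    rw [pow_add]
    refine Finset.sum_congr rfl fun i _ => ?_
    conv_rhs => rw [Finset.sum_comm]
    refine Finset.sum_congr rfl fun k _ => ?_
    rw [Matrix.mul_apply, Finset.mul_sum, Finset.sum_mul]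
    exact Finset.sum_congr rfl fun j _ => by simp only [hwdef, hddef]; ring
  have hT1 : ∑ i, ∑ j, ∑ k, w i j k * d i j ^ 2 = En x p A m := by
    unfold En
    refine Finset.sum_congr rfl fun i _ => Finset.sum_congr rfl fun j _ => ?_
    calc ∑ k, w i j k * d i j ^ 2
        = (p i * B i j * d i j ^ 2) * ∑ k, C j k := by
          rw [Finset.mul_sum]; exact Finset.sum_congr rfl fun k _ => by
            simp only [hwdef]; ring
      _ = p i * B i j * d i j ^ 2 := by rw [hCrow j, mul_one]
  have hT2 : ∑ i, ∑ j, ∑ k, w i j k * d j k ^ 2 = En x p A n := by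
    rw [Finset.sum_comm]
    unfold En
    refine Finset.sum_congr rfl fun j _ => ?_
    rw [Finset.sum_comm]
    refine Finset.sum_congr rfl fun k _ => ?_
    calc ∑ i, w i j k * d j k ^ 2
        = (∑ i, p i * B i j) * (C j k * d j k ^ 2) := by
          rw [Finset.sum_mul]; exact Finset.sum_congr rfl fun i _ => by
            simp only [hwdef]; ring
      _ = p j * C j k * d j k ^ 2 := by
          rw [pow_stationary A p hrev hArow m j]; ring
  have cross : ∑ i, ∑ j, ∑ k, w i j k * (d i j * d j k) ≤
      Real.sqrt (En x p A m) * Real.sqrt (En x p A n) := by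
    have cs := Real.sum_mul_le_sqrt_mul_sqrt (univ : Finset (Fin N × Fin N × Fin N))
      (fun t => Real.sqrt (w t.1 t.2.1 t.2.2) * d t.1 t.2.1)
      (fun t => Real.sqrt (w t.1 t.2.1 t.2.2) * d t.2.1 t.2.2)
    have e1 : ∑ t : Fin N × Fin N × Fin N,
        (Real.sqrt (w t.1 t.2.1 t.2.2) * d t.1 t.2.1) *
        (Real.sqrt (w t.1 t.2.1 t.2.2) * d t.2.1 t.2.2)
        = ∑ i, ∑ j, ∑ k, w i j k * (d i j * d j k) := by
      rw [Fintype.sum_prod_type]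
      refine Finset.sum_congr rfl fun i _ => ?_
      rw [Fintype.sum_prod_type]
      refine Finset.sum_congr rfl fun j _ => Finset.sum_congr rfl fun k _ => ?_
      have : Real.sqrt (w i j k) * Real.sqrt (w i j k) = w i j k :=
        Real.mul_self_sqrt (hw0 i j k)
      calc (Real.sqrt (w i j k) * d i j) * (Real.sqrt (w i j k) * d j k)
          = (Real.sqrt (w i j k) * Real.sqrt (w i j k)) * (d i j * d j k) := by ring
        _ = w i j k * (d i j * d j k) := by rw [this]
    have e2 : ∑ t : Fin N × Fin N × Fin N,
        (Real.sqrt (w t.1 t.2.1 t.2.2) * d t.1 t.2.1) ^ 2 = En x p A m := by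
      rw [Fintype.sum_prod_type]
      rw [← hT1]
      refine Finset.sum_congr rfl fun i _ => ?_
      rw [Fintype.sum_prod_type]
      refine Finset.sum_congr rfl fun j _ => Finset.sum_congr rfl fun k _ => ?_
      rw [mul_pow, Real.sq_sqrt (hw0 i j k)]
    have e3 : ∑ t : Fin N × Fin N × Fin N,
        (Real.sqrt (w t.1 t.2.1 t.2.2) * d t.2.1 t.2.2) ^ 2 = En x p A n := by
      rw [Fintype.sum_prod_type]
      rw [← hT2]
      refine Finset.sum_congr rfl fun i _ => ?_
      rw [Fintype.sum_prod_type]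
      refine Finset.sum_congr rfl fun j _ => Finset.sum_congr rfl fun k _ => ?_
      rw [mul_pow, Real.sq_sqrt (hw0 i j k)]
    rw [e1, e2, e3] at cs
    exact cs
  have tri : En x p A (m + n) ≤ (∑ i, ∑ j, ∑ k, w i j k * d i j ^ 2)
      + 2 * (∑ i, ∑ j, ∑ k, w i j k * (d i j * d j k))
      + (∑ i, ∑ j, ∑ k, w i j k * d j k ^ 2) := by
    rw [expand]
    have step : ∀ i j k, w i j k * d i k ^ 2 ≤
        w i j k * d i j ^ 2 + 2 * (w i j k * (d i j * d j k)) + w i j k * d j k ^ 2 := by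
      intro i j k
      have htri : d i k ≤ d i j + d j k := dist_triangle (x i) (x j) (x k)
      have h1 : d i k ^ 2 ≤ (d i j + d j k) ^ 2 := by
        have h0 : (0:ℝ) ≤ d i k := dist_nonneg
        nlinarith
      nlinarith [hw0 i j k]
    calc ∑ i, ∑ j, ∑ k, w i j k * d i k ^ 2
        ≤ ∑ i, ∑ j, ∑ k, (w i j k * d i j ^ 2 + 2 * (w i j k * (d i j * d j k))
            + w i j k * d j k ^ 2) := by
          refine Finset.sum_le_sum fun i _ => Finset.sum_le_sum fun j _ =>
            Finset.sum_le_sum fun k _ => step i j k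
      _ = _ := by
          simp only [Finset.sum_add_distrib, Finset.mul_sum]
  have key : En x p A (m + n) ≤
      (Real.sqrt (En x p A m) + Real.sqrt (En x p A n)) ^ 2 := by
    have hEm : Real.sqrt (En x p A m) ^ 2 = En x p A m :=
      Real.sq_sqrt (En_nonneg x p A hp0 hA0 m)
    have hEn : Real.sqrt (En x p A n) ^ 2 = En x p A n :=
      Real.sq_sqrt (En_nonneg x p A hp0 hA0 n)
    nlinarith [tri, cross, hT1, hT2]
  calc Real.sqrt (En x p A (m + n))
      ≤ Real.sqrt ((Real.sqrt (En x p A m) + Real.sqrt (En x p A n)) ^ 2) :=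
        Real.sqrt_le_sqrt key
    _ = Real.sqrt (En x p A m) + Real.sqrt (En x p A n) :=
        Real.sqrt_sq (by positivity)


theorem sqrt_combine {a b : ℝ} (hb : 0 ≤ b) (hba : b ≤ a) :
    Real.sqrt a + (1 + Real.sqrt 2) * Real.sqrt b ≤
      (1 + Real.sqrt 2) * Real.sqrt (a + b) := by
  have ha : 0 ≤ a := hb.trans hba
  have s2 : Real.sqrt 2 ^ 2 = 2 := Real.sq_sqrt (by norm_num)
  have s2n : 0 ≤ Real.sqrt 2 := Real.sqrt_nonneg 2
  have sa : Real.sqrt a ^ 2 = a := Real.sq_sqrt ha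
  have sb : Real.sqrt b ^ 2 = b := Real.sq_sqrt hb
  have san : 0 ≤ Real.sqrt a := Real.sqrt_nonneg a
  have sbn : 0 ≤ Real.sqrt b := Real.sqrt_nonneg b
  have hle : Real.sqrt b ≤ Real.sqrt a := Real.sqrt_le_sqrt hba
  have hsq : (Real.sqrt a + (1 + Real.sqrt 2) * Real.sqrt b) ^ 2 ≤
      ((1 + Real.sqrt 2) * Real.sqrt (a + b)) ^ 2 := by
    have sab : Real.sqrt (a + b) ^ 2 = a + b := Real.sq_sqrt (by linarith)
    nlinarith [mul_nonneg san sbn, mul_nonneg san (sub_nonneg.2 hle)]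
  calc Real.sqrt a + (1 + Real.sqrt 2) * Real.sqrt b
      = Real.sqrt ((Real.sqrt a + (1 + Real.sqrt 2) * Real.sqrt b) ^ 2) :=
        (Real.sqrt_sq (by positivity)).symm
    _ ≤ Real.sqrt (((1 + Real.sqrt 2) * Real.sqrt (a + b)) ^ 2) :=
        Real.sqrt_le_sqrt hsq
    _ = (1 + Real.sqrt 2) * Real.sqrt (a + b) := Real.sqrt_sq (by positivity)


theorem En_two_pow (hp0 : ∀ i, 0 ≤ p i)
    (hsturm : ∀ (y : X) (a : Fin N → ℝ),
      (∀ i, 0 ≤ a i) → (∀ i, a i ≤ 1) → ∑ i, a i = 1 →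
      ∑ i, ∑ j, a i * a j *
        (dist (x i) (x j) ^ 2 - dist (x i) y ^ 2 - dist (x j) y ^ 2) ≤ 0)
    (hA0 : ∀ i j, 0 ≤ A i j) (hArow : ∀ i, ∑ j, A i j = 1)
    (hrev : ∀ i j, p i * A i j = p j * A j i) (k : ℕ) :
    En x p A (2 ^ k) ≤ 2 ^ k * En x p A 1 := by
  induction k with
  | zero => simp
  | succ n ih =>
    have h2 : (2:ℕ) ^ (n + 1) = 2 * 2 ^ n := by ring
    rw [h2]
    calc En x p A (2 * 2 ^ n) ≤ 2 * En x p A (2 ^ n) :=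
          En_doubling x p A hsturm hp0 hA0 hArow hrev (2 ^ n)
      _ ≤ 2 * (2 ^ n * En x p A 1) := by linarith
      _ = 2 ^ (n + 1) * En x p A 1 := by ring

theorem En_sqrt_bound (hp0 : ∀ i, 0 ≤ p i)
    (hsturm : ∀ (y : X) (a : Fin N → ℝ),
      (∀ i, 0 ≤ a i) → (∀ i, a i ≤ 1) → ∑ i, a i = 1 →
      ∑ i, ∑ j, a i * a j *
        (dist (x i) (x j) ^ 2 - dist (x i) y ^ 2 - dist (x j) y ^ 2) ≤ 0)
    (hA0 : ∀ i j, 0 ≤ A i j) (hArow : ∀ i, ∑ j, A i j = 1)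
    (hrev : ∀ i j, p i * A i j = p j * A j i) :
    ∀ l : ℕ, Real.sqrt (En x p A l) ≤
      (1 + Real.sqrt 2) * Real.sqrt l * Real.sqrt (En x p A 1) := by
  intro l
  induction l using Nat.strong_induction_on with
  | _ l ih =>
    rcases Nat.eq_zero_or_pos l with hl | hl
    · subst hl
      rw [En_zero]
      simp
    · set K := Nat.log 2 l with hK
      have hK1 : 2 ^ K ≤ l := Nat.pow_log_le_self 2 (by omega)
      have hK2 : l < 2 ^ (K + 1) := Nat.lt_pow_succ_log_self (by norm_num) l
      have hKpos : 0 < 2 ^ K := Nat.pow_pos (by norm_num)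
      set l' := l - 2 ^ K with hl'
      have hsplit : l = 2 ^ K + l' := by omega
      have hl'le : l' ≤ 2 ^ K := by
        have : 2 ^ (K + 1) = 2 ^ K * 2 := pow_succ 2 K
        omega
      have hl'lt : l' < l := by omega
      have hE1 : 0 ≤ Real.sqrt (En x p A 1) := Real.sqrt_nonneg _
      have step1 : Real.sqrt (En x p A l) ≤
          Real.sqrt (En x p A (2 ^ K)) + Real.sqrt (En x p A l') := by
        rw [hsplit]
        exact En_c2 x p A hp0 hA0 hArow hrev (2 ^ K) l'
      have step2 : Real.sqrt (En x p A (2 ^ K)) ≤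
          Real.sqrt ((2 : ℝ) ^ K) * Real.sqrt (En x p A 1) := by
        calc Real.sqrt (En x p A (2 ^ K)) ≤ Real.sqrt (2 ^ K * En x p A 1) :=
              Real.sqrt_le_sqrt (by
                have := En_two_pow x p A hp0 hsturm hA0 hArow hrev K
                push_cast at this ⊢
                linarith)
          _ = Real.sqrt ((2 : ℝ) ^ K) * Real.sqrt (En x p A 1) :=
              Real.sqrt_mul (by positivity) _
      have step3 : Real.sqrt (En x p A l') ≤
          (1 + Real.sqrt 2) * Real.sqrt l' * Real.sqrt (En x p A 1) := ih l' hl'lt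
      have comb : Real.sqrt ((2 : ℝ) ^ K) + (1 + Real.sqrt 2) * Real.sqrt l' ≤
          (1 + Real.sqrt 2) * Real.sqrt ((2 : ℝ) ^ K + l') :=
        sqrt_combine (by positivity) (by
          have : (l' : ℝ) ≤ (2 : ℝ) ^ K := by exact_mod_cast hl'le
          linarith)
      have hcast : ((l : ℕ) : ℝ) = (2 : ℝ) ^ K + l' := by
        rw [hsplit]; push_cast; ring
      calc Real.sqrt (En x p A l)
          ≤ Real.sqrt (En x p A (2 ^ K)) + Real.sqrt (En x p A l') := step1
        _ ≤ Real.sqrt ((2 : ℝ) ^ K) * Real.sqrt (En x p A 1)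
            + (1 + Real.sqrt 2) * Real.sqrt l' * Real.sqrt (En x p A 1) := by
              linarith
        _ = (Real.sqrt ((2 : ℝ) ^ K) + (1 + Real.sqrt 2) * Real.sqrt l')
            * Real.sqrt (En x p A 1) := by ring
        _ ≤ ((1 + Real.sqrt 2) * Real.sqrt ((2 : ℝ) ^ K + l'))
            * Real.sqrt (En x p A 1) := mul_le_mul_of_nonneg_right comb hE1
        _ = (1 + Real.sqrt 2) * Real.sqrt l * Real.sqrt (En x p A 1) := by
              rw [hcast]

end Stmt6Aux


open Finset

/-- Main theorem: a metric space satisfying Sturm's inequality (e.g. an Alexandrov space of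
nonnegative curvature) has Markov type 2 with constant at most `1 + √2`. -/
theorem stmt6 {X : Type*} [MetricSpace X]
    (hsturm : ∀ (N : ℕ) (x : Fin N → X) (y : X) (a : Fin N → ℝ),
      (∀ i, 0 ≤ a i) → (∀ i, a i ≤ 1) → ∑ i, a i = 1 →
      ∑ i, ∑ j, a i * a j *
        (dist (x i) (x j) ^ 2 - dist (x i) y ^ 2 - dist (x j) y ^ 2) ≤ 0) :
    ∀ (l N : ℕ) (x : Fin N → X) (p : Fin N → ℝ) (A : Matrix (Fin N) (Fin N) ℝ),
      (∀ i, 0 ≤ p i) → (∀ i, p i ≤ 1) → ∑ i, p i = 1 →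
      (∀ i j, 0 ≤ A i j) → (∀ i j, A i j ≤ 1) → (∀ i, ∑ j, A i j = 1) →
      (∀ i j, p i * A i j = p j * A j i) →
      ∑ i, ∑ j, p i * (A ^ l) i j * dist (x i) (x j) ^ 2 ≤
        (1 + Real.sqrt 2) ^ 2 * l * ∑ i, ∑ j, p i * A i j * dist (x i) (x j) ^ 2 := by
  intro l N x p A hp0 hp1 hpsum hA0 hA1 hArow hrev
  have hEl : ∑ i, ∑ j, p i * (A ^ l) i j * dist (x i) (x j) ^ 2 = Stmt6Aux.En x p A l := rfl
  have hE1 : ∑ i, ∑ j, p i * A i j * dist (x i) (x j) ^ 2 = Stmt6Aux.En x p A 1 := by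
    unfold Stmt6Aux.En
    simp [pow_one]
  rw [hEl, hE1]
  have hb := Stmt6Aux.En_sqrt_bound x p A hp0 (fun y a => hsturm N x y a) hA0 hArow hrev l
  have h0l : 0 ≤ Stmt6Aux.En x p A l := Stmt6Aux.En_nonneg x p A hp0 hA0 l
  have h01 : 0 ≤ Stmt6Aux.En x p A 1 := Stmt6Aux.En_nonneg x p A hp0 hA0 1
  have hsq : Stmt6Aux.En x p A l ≤
      ((1 + Real.sqrt 2) * Real.sqrt l * Real.sqrt (Stmt6Aux.En x p A 1)) ^ 2 := by
    calc Stmt6Aux.En x p A l = Real.sqrt (Stmt6Aux.En x p A l) ^ 2 := (Real.sq_sqrt h0l).symm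
      _ ≤ ((1 + Real.sqrt 2) * Real.sqrt l * Real.sqrt (Stmt6Aux.En x p A 1)) ^ 2 :=
        pow_le_pow_left₀ (Real.sqrt_nonneg _) hb 2
  calc Stmt6Aux.En x p A l
      ≤ ((1 + Real.sqrt 2) * Real.sqrt l * Real.sqrt (Stmt6Aux.En x p A 1)) ^ 2 := hsq
    _ = (1 + Real.sqrt 2) ^ 2 * (Real.sqrt l ^ 2) * (Real.sqrt (Stmt6Aux.En x p A 1) ^ 2) := by
        ring
    _ = (1 + Real.sqrt 2) ^ 2 * l * Stmt6Aux.En x p A 1 := by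
        rw [Real.sq_sqrt (by positivity : (0:ℝ) ≤ (l:ℝ)), Real.sq_sqrt h01]
end

section
/- Let (X,d) be a geodesic metric space and S ≥ 1 a constant such that for all x,y,z ∈ X and every minimal geodesic γ:[0,1]→X from x to z, d(w,γ(1/2))² ≤ (S²/2)d(w,x)² + (1/2)d(w,z)² − (1/4)d(x,z)² holds for all w (with the roles of points as stated). Then for any four points w,x,y,z ∈ X: d(w,y)² + d(x,z)² ≤ S²( d(w,x)² + d(y,z)² ) + d(w,z)² + d(y,x)². -/
/-- A unit-interval parametrized minimal (constant-speed, length-minimizing)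
geodesic from `y` to `z`. -/
def IsMinGeodesic {X : Type*} [MetricSpace X] (γ : ℝ → X) (y z : X) : Prop :=
  γ 0 = y ∧ γ 1 = z ∧
    ∀ s ∈ Set.Icc (0:ℝ) 1, ∀ t ∈ Set.Icc (0:ℝ) 1,
      dist (γ s) (γ t) = |s - t| * dist y z

lemma reverse_geo {X : Type*} [MetricSpace X] {γ : ℝ → X} {y z : X}
    (h : IsMinGeodesic γ y z) : IsMinGeodesic (fun t => γ (1 - t)) z y := by
  obtain ⟨h0, h1, hd⟩ := h
  refine ⟨by simpa using h1, by simpa using h0, ?_⟩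
  intro s hs t ht
  rw [dist_comm z y, hd (1 - s) ⟨by linarith [hs.2], by linarith [hs.1]⟩
    (1 - t) ⟨by linarith [ht.2], by linarith [ht.1]⟩]
  congr 1
  rw [show (1 - s) - (1 - t) = -(s - t) by ring, abs_neg]

/-- The generalized 2-uniform smoothness (relaxed CAT(0)) midpoint inequality implies the
four-point inequality. -/
theorem stmt8 {X : Type*} [MetricSpace X] (S : ℝ) (hS : 1 ≤ S)
    (hgeo : ∀ y z : X, ∃ γ : ℝ → X, IsMinGeodesic γ y z)
    (hmid : ∀ (w x z : X) (γ : ℝ → X), IsMinGeodesic γ x z →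
      dist w (γ (1/2)) ^ 2 ≤
        S ^ 2 / 2 * dist w x ^ 2 + (1/2) * dist w z ^ 2 - (1/4) * dist x z ^ 2) :
    ∀ w x y z : X,
      dist w y ^ 2 + dist x z ^ 2 ≤
        S ^ 2 * (dist w x ^ 2 + dist y z ^ 2) + dist w z ^ 2 + dist y x ^ 2 := by
  intro w x y z
  obtain ⟨γ, hγ⟩ := hgeo x z
  have h1 := hmid w x z γ hγ
  have h2 := hmid y z x (fun t => γ (1 - t)) (reverse_geo hγ)
  have hm : γ (1 - 1/2) = γ (1/2) := by norm_num
  rw [hm] at h2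
  have htri : dist w y ≤ dist w (γ (1/2)) + dist (γ (1/2)) y := dist_triangle _ _ _
  have hsq : dist w y ^ 2 ≤ 2 * dist w (γ (1/2)) ^ 2 + 2 * dist (γ (1/2)) y ^ 2 := by
    nlinarith [dist_nonneg (x := w) (y := y), dist_nonneg (x := w) (y := γ (1/2)),
      dist_nonneg (x := γ (1/2)) (y := y),
      sq_nonneg (dist w (γ (1/2)) - dist (γ (1/2)) y)]
  rw [dist_comm (γ (1/2)) y] at hsq
  rw [dist_comm z x] at h2
  nlinarith [h1, h2, hsq]
end

section
/- Let (X,d) be a metric space and S ≥ 1 such that the four-point inequality d(w,y)² + d(x,z)² ≤ S²( d(w,x)² + d(y,z)² ) + d(w,z)² + d(y,x)² holds for all w,x,y,z ∈ X. Then X has Enflo type 2 with constant S: for every N ∈ ℕ and every family of points (x_ε) indexed by ε ∈ {−1,1}^N, Σ_ε d(x_ε, x_{−ε})² ≤ S² Σ_{ε∼ε'} d(x_ε, x_{ε'})², where ε ∼ ε' means ε and ε' differ in exactly one coordinate. -/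
set_option maxHeartbeats 1000000


open Finset

/-- Two vertices of the discrete cube `{−1,1}^N` (modelled as `Fin N → Bool`) are adjacent
if they differ in exactly one coordinate. -/
def Adjacent {N : ℕ} (ε ε' : Fin N → Bool) : Prop :=
  (Finset.univ.filter fun i => ε i ≠ ε' i).card = 1

instance {N : ℕ} (ε ε' : Fin N → Bool) : Decidable (Adjacent ε ε') := by
  unfold Adjacent; infer_instance

lemma sum_cube_succ {n : ℕ} (f : (Fin (n+1) → Bool) → ℝ) :
    ∑ ε, f ε = ∑ δ : Fin n → Bool, (f (Fin.cons false δ) + f (Fin.cons true δ)) := by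
  have h : ∑ p : Bool × (Fin n → Bool), f (Fin.cons p.1 p.2) = ∑ ε, f ε :=
    Fintype.sum_equiv (Fin.consEquiv fun _ => Bool) _ _ (fun _ => rfl)
  rw [← h, Fintype.sum_prod_type_right]
  refine Finset.sum_congr rfl fun δ _ => ?_
  simp [add_comm]

lemma diff_cons {n : ℕ} (b b' : Bool) (δ δ' : Fin n → Bool) :
    (Finset.univ.filter fun i =>
        (Fin.cons b δ : Fin (n+1) → Bool) i ≠ (Fin.cons b' δ' : Fin (n+1) → Bool) i).card
      = (if b = b' then 0 else 1) + (Finset.univ.filter fun i => δ i ≠ δ' i).card := by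
  rw [Finset.card_filter, Finset.card_filter, Fin.sum_univ_succ]
  simp only [Fin.cons_zero, Fin.cons_succ]
  by_cases h : b = b' <;> simp [h]

lemma adjacent_cons_same {n : ℕ} (b : Bool) (δ δ' : Fin n → Bool) :
    Adjacent (Fin.cons b δ) (Fin.cons b δ') ↔ Adjacent δ δ' := by
  unfold Adjacent; rw [diff_cons]; simp

lemma adjacent_cons_ne {n : ℕ} (b b' : Bool) (h : b ≠ b') (δ δ' : Fin n → Bool) :
    Adjacent (Fin.cons b δ) (Fin.cons b' δ') ↔ δ = δ' := by
  unfold Adjacent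
  rw [diff_cons, if_neg h]
  rw [show (1 : ℕ) + (Finset.univ.filter fun i => δ i ≠ δ' i).card = 1 ↔
      (Finset.univ.filter fun i => δ i ≠ δ' i).card = 0 by omega,
    Finset.card_eq_zero, Finset.filter_eq_empty_iff]
  simp [funext_iff]

lemma neg_cons {n : ℕ} (b : Bool) (δ : Fin n → Bool) :
    (fun i => !((Fin.cons b δ : Fin (n+1) → Bool) i))
      = (Fin.cons (!b) (fun i => !(δ i)) : Fin (n+1) → Bool) := by
  funext i
  refine Fin.cases ?_ ?_ i <;> simp

/-- The four-point inequality with constant `S` implies Enflo type 2 with constant `S`. -/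
theorem stmt9 {X : Type*} [MetricSpace X] (S : ℝ) (hS : 1 ≤ S)
    (hfour : ∀ w x y z : X,
      dist w y ^ 2 + dist x z ^ 2 ≤
        S ^ 2 * (dist w x ^ 2 + dist y z ^ 2) + dist w z ^ 2 + dist y x ^ 2)
    (N : ℕ) (x : (Fin N → Bool) → X) :
    ∑ ε : Fin N → Bool, dist (x ε) (x (fun i => !(ε i))) ^ 2 ≤
      S ^ 2 * ∑ ε : Fin N → Bool, ∑ ε' : Fin N → Bool,
        if Adjacent ε ε' then dist (x ε) (x ε') ^ 2 else 0 := by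
  induction N with
  | zero =>
      have h1 : ∀ ε : Fin 0 → Bool, (fun i => !(ε i)) = ε := fun ε => funext fun i => i.elim0
      simp only [h1, dist_self]
      have : (0:ℝ) ≤ ∑ ε : Fin 0 → Bool, ∑ ε' : Fin 0 → Bool,
          if Adjacent ε ε' then dist (x ε) (x ε') ^ 2 else 0 := by
        apply Finset.sum_nonneg; intro ε _
        apply Finset.sum_nonneg; intro ε' _
        positivity
      simp only [ne_eq, zero_pow, OfNat.ofNat_ne_zero, not_false_eq_true, Finset.sum_const,
        smul_zero]
      nlinarith
  | succ n ih =>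
      set nf : (Fin n → Bool) → (Fin n → Bool) := fun δ i => !(δ i) with hnf
      set y : (Fin n → Bool) → X := fun δ => x (Fin.cons false δ) with hy
      set z : (Fin n → Bool) → X := fun δ => x (Fin.cons true δ) with hz
      set A : ℝ := ∑ δ : Fin n → Bool, dist (y δ) (z δ) ^ 2 with hA
      set Dy : ℝ := ∑ δ : Fin n → Bool, dist (y δ) (y (nf δ)) ^ 2 with hDy
      set Dz : ℝ := ∑ δ : Fin n → Bool, dist (z δ) (z (nf δ)) ^ 2 with hDz
      set Ey : ℝ := ∑ δ : Fin n → Bool, ∑ δ' : Fin n → Bool,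
          (if Adjacent δ δ' then dist (y δ) (y δ') ^ 2 else 0) with hEy
      set Ez : ℝ := ∑ δ : Fin n → Bool, ∑ δ' : Fin n → Bool,
          (if Adjacent δ δ' then dist (z δ) (z δ') ^ 2 else 0) with hEz
      have hnf_bij : Function.Bijective nf := by
        apply Function.Involutive.bijective
        intro δ; funext i; simp [hnf]
      -- LHS rewrite
      have hL : ∑ ε : Fin (n+1) → Bool, dist (x ε) (x (fun i => !(ε i))) ^ 2
          = ∑ δ : Fin n → Bool,
              (dist (y δ) (z (nf δ)) ^ 2 + dist (z δ) (y (nf δ)) ^ 2) := by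
        rw [sum_cube_succ (fun ε => dist (x ε) (x (fun i => !(ε i))) ^ 2)]
        refine Finset.sum_congr rfl fun δ _ => ?_
        rw [neg_cons, neg_cons]
        simp [hy, hz, hnf]
      -- RHS rewrite
      have hR : ∑ ε : Fin (n+1) → Bool, ∑ ε' : Fin (n+1) → Bool,
            (if Adjacent ε ε' then dist (x ε) (x ε') ^ 2 else 0)
          = Ey + Ez + 2 * A := by
        rw [sum_cube_succ]
        have step : ∀ δ : Fin n → Bool,
            (∑ ε' : Fin (n+1) → Bool,
              (if Adjacent (Fin.cons false δ) ε' then dist (x (Fin.cons false δ)) (x ε') ^ 2 else 0))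
            = (∑ δ' : Fin n → Bool,
                (if Adjacent δ δ' then dist (y δ) (y δ') ^ 2 else 0))
              + dist (y δ) (z δ) ^ 2 := by
          intro δ
          rw [sum_cube_succ (fun ε' => if Adjacent (Fin.cons false δ) ε' then
            dist (x (Fin.cons false δ)) (x ε') ^ 2 else 0), Finset.sum_add_distrib]
          congr 1
          · refine Finset.sum_congr rfl fun δ' _ => ?_
            exact if_congr (adjacent_cons_same false δ δ') rfl rfl
          · have h2 : ∀ δ' : Fin n → Bool,
                (if Adjacent (Fin.cons false δ) (Fin.cons true δ') then
                  dist (x (Fin.cons false δ)) (x (Fin.cons true δ')) ^ 2 else 0)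
                = if δ = δ' then dist (y δ) (z δ') ^ 2 else 0 := by
              intro δ'
              exact if_congr (adjacent_cons_ne false true (by simp) δ δ') rfl rfl
            simp only [h2]
            rw [Finset.sum_ite_eq]
            simp
        have step2 : ∀ δ : Fin n → Bool,
            (∑ ε' : Fin (n+1) → Bool,
              (if Adjacent (Fin.cons true δ) ε' then dist (x (Fin.cons true δ)) (x ε') ^ 2 else 0))
            = (∑ δ' : Fin n → Bool,
                (if Adjacent δ δ' then dist (z δ) (z δ') ^ 2 else 0))
              + dist (y δ) (z δ) ^ 2 := by
          intro δ
          rw [sum_cube_succ (fun ε' => if Adjacent (Fin.cons true δ) ε' then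
            dist (x (Fin.cons true δ)) (x ε') ^ 2 else 0), Finset.sum_add_distrib]
          rw [add_comm]
          congr 1
          · refine Finset.sum_congr rfl fun δ' _ => ?_
            exact if_congr (adjacent_cons_same true δ δ') rfl rfl
          · have h2 : ∀ δ' : Fin n → Bool,
                (if Adjacent (Fin.cons true δ) (Fin.cons false δ') then
                  dist (x (Fin.cons true δ)) (x (Fin.cons false δ')) ^ 2 else 0)
                = if δ = δ' then dist (z δ) (y δ') ^ 2 else 0 := by
              intro δ'
              exact if_congr (adjacent_cons_ne true false (by simp) δ δ') rfl rfl
            simp only [h2]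
            rw [Finset.sum_ite_eq]
            simp [dist_comm]
        simp only [step, step2]
        rw [Finset.sum_add_distrib, Finset.sum_add_distrib, Finset.sum_add_distrib]
        rw [hEy, hEz, hA]
        ring
      -- reindex by nf
      have hreidx : ∑ δ : Fin n → Bool, dist (z (nf δ)) (y (nf δ)) ^ 2 = A := by
        rw [Fintype.sum_bijective nf hnf_bij _ (fun δ => dist (z δ) (y δ) ^ 2) (fun _ => rfl)]
        rw [hA]
        exact Finset.sum_congr rfl fun δ _ => by rw [dist_comm]
      -- four-point per δ, summed
      have hfp : ∑ δ : Fin n → Bool,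
            (dist (y δ) (z (nf δ)) ^ 2 + dist (z δ) (y (nf δ)) ^ 2)
          ≤ S ^ 2 * A + S ^ 2 * A + Dy + Dz := by
        calc ∑ δ : Fin n → Bool,
              (dist (y δ) (z (nf δ)) ^ 2 + dist (z δ) (y (nf δ)) ^ 2)
            ≤ ∑ δ : Fin n → Bool,
              (S ^ 2 * (dist (y δ) (z δ) ^ 2 + dist (z (nf δ)) (y (nf δ)) ^ 2)
                + dist (y δ) (y (nf δ)) ^ 2 + dist (z (nf δ)) (z δ) ^ 2) := by
              apply Finset.sum_le_sum
              intro δ _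
              exact hfour (y δ) (z δ) (z (nf δ)) (y (nf δ))
          _ = S ^ 2 * A + S ^ 2 * A + Dy + Dz := by
              rw [Finset.sum_add_distrib, Finset.sum_add_distrib, ← Finset.mul_sum,
                Finset.sum_add_distrib, hreidx, hA, hDy, hDz]
              have : ∑ δ : Fin n → Bool, dist (z (nf δ)) (z δ) ^ 2
                  = ∑ δ : Fin n → Bool, dist (z δ) (z (nf δ)) ^ 2 :=
                Finset.sum_congr rfl fun δ _ => by rw [dist_comm]
              rw [this]
              ring
      -- induction hypotheses for the two faces
      have hy1 : Dy ≤ S ^ 2 * Ey := ih y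
      have hz1 : Dz ≤ S ^ 2 * Ez := ih z
      rw [hL, hR]
      nlinarith [hy1, hz1, hfp, sq_nonneg S]
end

section
/- Every CAT(0) space has Enflo type 2 with constant 1: for every N ∈ ℕ and every family (x_ε) ⊂ X indexed by ε ∈ {−1,1}^N, Σ_ε d(x_ε, x_{−ε})² ≤ Σ_{ε∼ε'} d(x_ε, x_{ε'})², where ε ∼ ε' means the indices differ in exactly one coordinate. -/
open Finset

lemma adj_sum {N : ℕ} (ε : Fin N → Bool) (f : (Fin N → Bool) → ℝ) :
    ∑ ε' : Fin N → Bool, (if Adjacent ε ε' then f ε' else 0)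
      = ∑ i : Fin N, f (Function.update ε i (!ε i)) := by
  rw [← Finset.sum_filter]
  have himg : Finset.univ.filter (fun ε' => Adjacent ε ε')
      = Finset.univ.image (fun i => Function.update ε i (!ε i)) := by
    ext ε'
    simp only [Finset.mem_filter, Finset.mem_univ, true_and, Finset.mem_image]
    constructor
    · intro h
      obtain ⟨i, hi⟩ := Finset.card_eq_one.mp h
      refine ⟨i, ?_⟩
      funext j
      by_cases hj : j = i
      · subst hj
        have : j ∈ Finset.univ.filter fun i => ε i ≠ ε' i := by
          rw [hi]; exact Finset.mem_singleton_self j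
        have hne : ε j ≠ ε' j := (Finset.mem_filter.mp this).2
        simp only [Function.update_self]
        revert hne; cases ε j <;> cases ε' j <;> simp
      · have : j ∉ Finset.univ.filter fun i => ε i ≠ ε' i := by
          rw [hi]; simpa using hj
        have heq : ε j = ε' j := by
          by_contra hne; exact this (Finset.mem_filter.mpr ⟨Finset.mem_univ _, hne⟩)
        rw [Function.update_of_ne hj, heq]
    · rintro ⟨i, rfl⟩
      have : (Finset.univ.filter fun j => ε j ≠ Function.update ε i (!ε i) j) = {i} := by
        ext j
        simp only [Finset.mem_filter, Finset.mem_univ, true_and, Finset.mem_singleton]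
        by_cases hj : j = i
        · subst hj; simp
        · simp [Function.update_of_ne hj, hj]
      unfold Adjacent
      rw [this, Finset.card_singleton]
  rw [himg, Finset.sum_image]
  intro i _ j _ hij
  by_contra h
  have := congrFun hij i
  beta_reduce at this
  rw [Function.update_self, Function.update_of_ne h] at this
  exact Bool.not_ne_self (ε i) this

lemma quad {X : Type*} [MetricSpace X]
    (hgeo : ∀ y z : X, ∃ γ : ℝ → X, IsMinGeodesic γ y z)
    (hcat : ∀ (x y z : X) (γ : ℝ → X), IsMinGeodesic γ y z →
      dist x (γ (1/2)) ^ 2 ≤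
        (1/2) * dist x y ^ 2 + (1/2) * dist x z ^ 2 - (1/4) * dist y z ^ 2)
    (a b c d : X) :
    dist a c ^ 2 + dist b d ^ 2 ≤
      dist a b ^ 2 + dist b c ^ 2 + dist c d ^ 2 + dist d a ^ 2 := by
  obtain ⟨γ, hγ⟩ := hgeo b d
  have h1 := hcat a b d γ hγ
  have h2 := hcat c b d γ hγ
  have t1 : dist a c ≤ dist a (γ (1/2)) + dist (γ (1/2)) c := dist_triangle _ _ _
  have n1 : (0:ℝ) ≤ dist a (γ (1/2)) := dist_nonneg
  have n2 : (0:ℝ) ≤ dist (γ (1/2)) c := dist_nonneg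
  have n3 : (0:ℝ) ≤ dist a c := dist_nonneg
  rw [dist_comm (γ (1/2)) c] at t1 n2
  rw [dist_comm c b] at h2
  have sq1 : dist a c ^ 2 ≤ (dist a (γ (1/2)) + dist c (γ (1/2))) ^ 2 := by nlinarith
  rw [dist_comm d a]
  nlinarith [sq_nonneg (dist a (γ (1/2)) - dist c (γ (1/2)))]

lemma key {X : Type*} [MetricSpace X]
    (hq : ∀ a b c d : X, dist a c ^ 2 + dist b d ^ 2 ≤
      dist a b ^ 2 + dist b c ^ 2 + dist c d ^ 2 + dist d a ^ 2) :
    ∀ (N : ℕ) (x : (Fin N → Bool) → X),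
      ∑ ε : Fin N → Bool, dist (x ε) (x (fun i => !(ε i))) ^ 2 ≤
        ∑ ε : Fin N → Bool, ∑ i : Fin N,
          dist (x ε) (x (Function.update ε i (!ε i))) ^ 2 := by
  intro N
  induction N with
  | zero =>
    intro x
    have h : ∀ ε : Fin 0 → Bool, (fun i => !(ε i)) = ε := fun ε => funext fun i => i.elim0
    simp [h]
  | succ N IH =>
    intro x
    -- reindex sums over the cube by Bool × cube N
    have hsum : ∀ f : (Fin (N+1) → Bool) → ℝ,
        ∑ ε : Fin (N+1) → Bool, f ε
          = ∑ δ : Fin N → Bool, (f (Fin.cons false δ) + f (Fin.cons true δ)) := by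
      intro f
      rw [← Equiv.sum_comp (Fin.consEquiv fun _ => Bool) f, Fintype.sum_prod_type]
      rw [Fintype.sum_bool]
      rw [← Finset.sum_add_distrib]
      exact Finset.sum_congr rfl fun δ _ => add_comm _ _
    have hneg : ∀ (b : Bool) (δ : Fin N → Bool),
        (fun i => !(Fin.cons (α := fun _ => Bool) b δ i)) = Fin.cons (!b) (fun i => !(δ i)) := by
      intro b δ; funext i
      refine Fin.cases ?_ ?_ i <;> simp
    -- negation on the cube is an involution hence a sum-preserving bijection
    have hinv : Function.Involutive (fun δ : Fin N → Bool => fun i => !(δ i)) :=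
      fun δ => funext fun i => Bool.not_not _
    have hnegsum : ∀ f : (Fin N → Bool) → ℝ,
        ∑ δ : Fin N → Bool, f (fun i => !(δ i)) = ∑ δ : Fin N → Bool, f δ :=
      fun f => Equiv.sum_comp hinv.toPerm f
    rw [hsum, hsum]
    -- compute inner sums over Fin (N+1)
    have hinner : ∀ (b : Bool) (δ : Fin N → Bool),
        ∑ i : Fin (N+1), dist (x (Fin.cons b δ))
            (x (Function.update (Fin.cons b δ) i (!(Fin.cons (α := fun _ => Bool) b δ i)))) ^ 2
          = dist (x (Fin.cons b δ)) (x (Fin.cons (!b) δ)) ^ 2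
            + ∑ j : Fin N, dist (x (Fin.cons b δ))
                (x (Fin.cons b (Function.update δ j (!(δ j))))) ^ 2 := by
      intro b δ
      rw [Fin.sum_univ_succ]
      have h0 : Function.update (Fin.cons b δ) (0 : Fin (N+1))
            (!(Fin.cons (α := fun _ => Bool) b δ 0)) = Fin.cons (α := fun _ => Bool) (!b) δ := by
        rw [Fin.cons_zero, Fin.update_cons_zero]
      have hs : ∀ j : Fin N, Function.update (Fin.cons b δ) (Fin.succ j)
            (!(Fin.cons (α := fun _ => Bool) b δ (Fin.succ j)))
          = Fin.cons (α := fun _ => Bool) b (Function.update δ j (!(δ j))) := by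
        intro j
        rw [Fin.cons_succ, ← Fin.cons_update]
      rw [h0]
      congr 1
      exact Finset.sum_congr rfl fun j _ => by rw [hs j]
    simp only [hneg, hinner, Bool.not_false, Bool.not_true]
    -- apply IH to each face
    have IHf := IH (fun δ => x (Fin.cons false δ))
    have IHt := IH (fun δ => x (Fin.cons true δ))
    have hquad : ∀ δ : Fin N → Bool,
        dist (x (Fin.cons false δ)) (x (Fin.cons true fun i => !(δ i))) ^ 2
          + dist (x (Fin.cons true δ)) (x (Fin.cons false fun i => !(δ i))) ^ 2
        ≤ dist (x (Fin.cons false δ)) (x (Fin.cons true δ)) ^ 2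
          + dist (x (Fin.cons true δ)) (x (Fin.cons true fun i => !(δ i))) ^ 2
          + dist (x (Fin.cons true fun i => !(δ i))) (x (Fin.cons false fun i => !(δ i))) ^ 2
          + dist (x (Fin.cons false fun i => !(δ i))) (x (Fin.cons false δ)) ^ 2 :=
      fun δ => hq _ _ _ _
    refine le_trans (Finset.sum_le_sum fun δ (_ : δ ∈ Finset.univ) => hquad δ) ?_
    simp only [Finset.sum_add_distrib]
    have e1 : ∑ δ : Fin N → Bool,
        dist (x (Fin.cons true fun i => !(δ i))) (x (Fin.cons false fun i => !(δ i))) ^ 2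
        = ∑ δ : Fin N → Bool, dist (x (Fin.cons false δ)) (x (Fin.cons true δ)) ^ 2 := by
      rw [hnegsum (fun δ => dist (x (Fin.cons true δ)) (x (Fin.cons false δ)) ^ 2)]
      exact Finset.sum_congr rfl fun δ _ => by rw [dist_comm]
    have e2 : ∑ δ : Fin N → Bool,
        dist (x (Fin.cons false fun i => !(δ i))) (x (Fin.cons false δ)) ^ 2
        = ∑ δ : Fin N → Bool, dist (x (Fin.cons false δ)) (x (Fin.cons false fun i => !(δ i))) ^ 2 := by
      exact Finset.sum_congr rfl fun δ _ => by rw [dist_comm]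
    have e3 : ∑ δ : Fin N → Bool, dist (x (Fin.cons true δ)) (x (Fin.cons false δ)) ^ 2
        = ∑ δ : Fin N → Bool, dist (x (Fin.cons false δ)) (x (Fin.cons true δ)) ^ 2 :=
      Finset.sum_congr rfl fun δ _ => by rw [dist_comm]
    rw [e1]
    linarith [IHf, IHt, e2, e3]

/-- Every CAT(0) space (geodesic space with the nonpositive-curvature midpoint comparison
inequality) has Enflo type 2 with constant 1. -/
theorem stmt10 {X : Type*} [MetricSpace X]
    (hgeo : ∀ y z : X, ∃ γ : ℝ → X, IsMinGeodesic γ y z)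
    (hcat : ∀ (x y z : X) (γ : ℝ → X), IsMinGeodesic γ y z →
      dist x (γ (1/2)) ^ 2 ≤
        (1/2) * dist x y ^ 2 + (1/2) * dist x z ^ 2 - (1/4) * dist y z ^ 2)
    (N : ℕ) (x : (Fin N → Bool) → X) :
    ∑ ε : Fin N → Bool, dist (x ε) (x (fun i => !(ε i))) ^ 2 ≤
      ∑ ε : Fin N → Bool, ∑ ε' : Fin N → Bool,
        if Adjacent ε ε' then dist (x ε) (x ε') ^ 2 else 0 := by
  have hrw : (∑ ε : Fin N → Bool, ∑ ε' : Fin N → Bool,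
        if Adjacent ε ε' then dist (x ε) (x ε') ^ 2 else 0)
      = ∑ ε : Fin N → Bool, ∑ i : Fin N,
          dist (x ε) (x (Function.update ε i (!ε i))) ^ 2 :=
    Finset.sum_congr rfl fun ε _ => adj_sum ε (fun ε' => dist (x ε) (x ε') ^ 2)
  rw [hrw]
  exact key (quad hgeo hcat) N x
end

section
/- Let V be a normed space with the property that for all v,w ∈ V, ‖(v+w)/2‖² ≥ (1/2)‖v‖² + (1/2)‖w‖² − (S²/4)‖v−w‖² (2-uniform smoothness with constant S). Then V has Enflo type 2 with constant S: for every N and (v_ε)_{ε∈{−1,1}^N} ⊂ V, Σ_ε ‖v_ε − v_{−ε}‖² ≤ S² Σ_{ε∼ε'} ‖v_ε − v_{ε'}‖², where ε∼ε' means differing in exactly one coordinate. -/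
open Finset

/-- The negation of a cube vertex extended by one coordinate. -/
lemma myNegCons {N : ℕ} (a : Bool) (δ : Fin N → Bool) :
    (fun i => !((Fin.cons a δ : Fin (N+1) → Bool) i)) = Fin.cons (!a) (fun i => !(δ i)) := by
  funext i
  refine Fin.cases ?_ ?_ i <;> simp

lemma mySumCubeSucc {M : Type*} [AddCommMonoid M] {N : ℕ} (F : (Fin (N+1) → Bool) → M) :
    ∑ ε : Fin (N+1) → Bool, F ε =
      ∑ δ : Fin N → Bool, F (Fin.cons true δ) + ∑ δ : Fin N → Bool, F (Fin.cons false δ) := by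
  rw [← Equiv.sum_comp (Fin.consEquiv fun _ => Bool) F, Fintype.sum_prod_type, Fintype.sum_bool]
  rfl

def myNegEquiv (N : ℕ) : (Fin N → Bool) ≃ (Fin N → Bool) where
  toFun δ i := !(δ i)
  invFun δ i := !(δ i)
  left_inv δ := by funext i; simp
  right_inv δ := by funext i; simp

lemma mySumNegReindex {M : Type*} [AddCommMonoid M] {N : ℕ} (F : (Fin N → Bool) → M) :
    ∑ δ : Fin N → Bool, F (fun i => !(δ i)) = ∑ δ : Fin N → Bool, F δ :=
  Equiv.sum_comp (myNegEquiv N) F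

lemma myAdjCons {N : ℕ} (a a' : Bool) (δ δ' : Fin N → Bool) :
    Adjacent (Fin.cons a δ) (Fin.cons a' δ') ↔
      (a = a' ∧ Adjacent δ δ') ∨ (a ≠ a' ∧ δ = δ') := by
  have hcard : (Finset.univ.filter fun i =>
        (Fin.cons a δ : Fin (N+1) → Bool) i ≠ (Fin.cons a' δ' : Fin (N+1) → Bool) i).card
      = (if a = a' then 0 else 1) + (Finset.univ.filter fun i => δ i ≠ δ' i).card := by
    rw [Finset.card_filter, Finset.card_filter, Fin.sum_univ_succ]
    simp [Fin.cons_zero, Fin.cons_succ, ite_not]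
  unfold Adjacent
  rw [hcard]
  by_cases h : a = a'
  · simp [h]
  · simp only [h, if_neg h, ite_false]
    constructor
    · intro hc
      refine Or.inr ⟨h, ?_⟩
      have : (Finset.univ.filter fun i => δ i ≠ δ' i).card = 0 := by omega
      rw [Finset.card_eq_zero, Finset.filter_eq_empty_iff] at this
      funext i
      have := this (Finset.mem_univ i)
      simpa using this
    · rintro (⟨h1, _⟩ | ⟨_, h2⟩)
      · exact h1.elim
      · subst h2
        simp

/-- The inductive cube argument, assuming the four-point inequality. -/
lemma myEnfloAux {V : Type*} [NormedAddCommGroup V] [NormedSpace ℝ V] (S : ℝ)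
    (h4 : ∀ w x y z : V, ‖w - y‖^2 + ‖x - z‖^2 ≤
      S^2 * (‖w - x‖^2 + ‖y - z‖^2) + ‖w - z‖^2 + ‖x - y‖^2) :
    ∀ N (v : (Fin N → Bool) → V),
      ∑ ε : Fin N → Bool, ‖v ε - v (fun i => !(ε i))‖ ^ 2 ≤
        S ^ 2 * ∑ ε : Fin N → Bool, ∑ ε' : Fin N → Bool,
          if Adjacent ε ε' then ‖v ε - v ε'‖ ^ 2 else 0 := by
  intro N
  induction N with
  | zero =>
    intro v
    have h0 : ∀ ε : Fin 0 → Bool, (fun i => !(ε i)) = ε := fun ε => Subsingleton.elim _ _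
    simp [h0, Adjacent]
  | succ N ih =>
    intro v
    -- LHS decomposition
    have hL : ∑ ε : Fin (N+1) → Bool, ‖v ε - v (fun i => !(ε i))‖ ^ 2
        = ∑ δ : Fin N → Bool, (‖v (Fin.cons true δ) - v (Fin.cons false (fun i => !(δ i)))‖ ^ 2
            + ‖v (Fin.cons false δ) - v (Fin.cons true (fun i => !(δ i)))‖ ^ 2) := by
      rw [mySumCubeSucc (fun ε => ‖v ε - v (fun i => !(ε i))‖ ^ 2), ← Finset.sum_add_distrib]
      apply Finset.sum_congr rfl
      intro δ _
      rw [myNegCons, myNegCons]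
      norm_num
    -- RHS decomposition
    have e1 : ∀ a : Bool, ∀ δ : Fin N → Bool,
        ∑ ε' : Fin (N+1) → Bool, (if Adjacent (Fin.cons a δ) ε' then ‖v (Fin.cons a δ) - v ε'‖ ^ 2 else 0)
        = (∑ δ' : Fin N → Bool, if Adjacent (Fin.cons a δ) (Fin.cons true δ') then ‖v (Fin.cons a δ) - v (Fin.cons true δ')‖ ^ 2 else 0)
          + ∑ δ' : Fin N → Bool, if Adjacent (Fin.cons a δ) (Fin.cons false δ') then ‖v (Fin.cons a δ) - v (Fin.cons false δ')‖ ^ 2 else 0 :=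
      fun a δ => mySumCubeSucc _
    have Ttt : ∑ δ : Fin N → Bool, ∑ δ' : Fin N → Bool,
          (if Adjacent (Fin.cons true δ) (Fin.cons true δ') then ‖v (Fin.cons true δ) - v (Fin.cons true δ')‖ ^ 2 else 0)
        = ∑ δ : Fin N → Bool, ∑ δ' : Fin N → Bool,
          if Adjacent δ δ' then ‖v (Fin.cons true δ) - v (Fin.cons true δ')‖ ^ 2 else 0 := by
      apply Finset.sum_congr rfl; intro δ _
      apply Finset.sum_congr rfl; intro δ' _
      simp [myAdjCons]
    have Tff : ∑ δ : Fin N → Bool, ∑ δ' : Fin N → Bool,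
          (if Adjacent (Fin.cons false δ) (Fin.cons false δ') then ‖v (Fin.cons false δ) - v (Fin.cons false δ')‖ ^ 2 else 0)
        = ∑ δ : Fin N → Bool, ∑ δ' : Fin N → Bool,
          if Adjacent δ δ' then ‖v (Fin.cons false δ) - v (Fin.cons false δ')‖ ^ 2 else 0 := by
      apply Finset.sum_congr rfl; intro δ _
      apply Finset.sum_congr rfl; intro δ' _
      simp [myAdjCons]
    have Ttf : ∑ δ : Fin N → Bool, ∑ δ' : Fin N → Bool,
          (if Adjacent (Fin.cons true δ) (Fin.cons false δ') then ‖v (Fin.cons true δ) - v (Fin.cons false δ')‖ ^ 2 else 0)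
        = ∑ δ : Fin N → Bool, ‖v (Fin.cons true δ) - v (Fin.cons false δ)‖ ^ 2 := by
      apply Finset.sum_congr rfl; intro δ _
      simp [myAdjCons, Finset.sum_ite_eq]
    have Tft : ∑ δ : Fin N → Bool, ∑ δ' : Fin N → Bool,
          (if Adjacent (Fin.cons false δ) (Fin.cons true δ') then ‖v (Fin.cons false δ) - v (Fin.cons true δ')‖ ^ 2 else 0)
        = ∑ δ : Fin N → Bool, ‖v (Fin.cons true δ) - v (Fin.cons false δ)‖ ^ 2 := by
      apply Finset.sum_congr rfl; intro δ _
      rw [norm_sub_rev]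
      simp [myAdjCons, Finset.sum_ite_eq]
    have hE : ∑ ε : Fin (N+1) → Bool, ∑ ε' : Fin (N+1) → Bool,
          (if Adjacent ε ε' then ‖v ε - v ε'‖ ^ 2 else 0)
        = (∑ δ : Fin N → Bool, ∑ δ' : Fin N → Bool,
            if Adjacent δ δ' then ‖v (Fin.cons true δ) - v (Fin.cons true δ')‖ ^ 2 else 0)
          + (∑ δ : Fin N → Bool, ∑ δ' : Fin N → Bool,
            if Adjacent δ δ' then ‖v (Fin.cons false δ) - v (Fin.cons false δ')‖ ^ 2 else 0)
          + 2 * ∑ δ : Fin N → Bool, ‖v (Fin.cons true δ) - v (Fin.cons false δ)‖ ^ 2 := by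
      rw [mySumCubeSucc (fun ε => ∑ ε' : Fin (N+1) → Bool,
        (if Adjacent ε ε' then ‖v ε - v ε'‖ ^ 2 else 0))]
      simp only [e1]
      rw [Finset.sum_add_distrib, Finset.sum_add_distrib, Ttt, Ttf, Tft, Tff]
      ring
    rw [hL, hE]
    -- pointwise four-point inequality then sum
    have hstep : ∑ δ : Fin N → Bool, (‖v (Fin.cons true δ) - v (Fin.cons false (fun i => !(δ i)))‖ ^ 2
            + ‖v (Fin.cons false δ) - v (Fin.cons true (fun i => !(δ i)))‖ ^ 2)
        ≤ ∑ δ : Fin N → Bool,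
            (S^2 * (‖v (Fin.cons true δ) - v (Fin.cons false δ)‖^2
              + ‖v (Fin.cons false (fun i => !(δ i))) - v (Fin.cons true (fun i => !(δ i)))‖^2)
            + ‖v (Fin.cons true δ) - v (Fin.cons true (fun i => !(δ i)))‖^2
            + ‖v (Fin.cons false δ) - v (Fin.cons false (fun i => !(δ i)))‖^2) := by
      apply Finset.sum_le_sum
      intro δ _
      exact h4 (v (Fin.cons true δ)) (v (Fin.cons false δ))
        (v (Fin.cons false (fun i => !(δ i)))) (v (Fin.cons true (fun i => !(δ i))))
    have hsplit : ∀ δ : Fin N → Bool,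
        (S^2 * (‖v (Fin.cons true δ) - v (Fin.cons false δ)‖^2
              + ‖v (Fin.cons false (fun i => !(δ i))) - v (Fin.cons true (fun i => !(δ i)))‖^2)
            + ‖v (Fin.cons true δ) - v (Fin.cons true (fun i => !(δ i)))‖^2
            + ‖v (Fin.cons false δ) - v (Fin.cons false (fun i => !(δ i)))‖^2)
        = S^2 * ‖v (Fin.cons true δ) - v (Fin.cons false δ)‖^2
          + S^2 * ‖v (Fin.cons false (fun i => !(δ i))) - v (Fin.cons true (fun i => !(δ i)))‖^2
          + ‖v (Fin.cons true δ) - v (Fin.cons true (fun i => !(δ i)))‖^2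
          + ‖v (Fin.cons false δ) - v (Fin.cons false (fun i => !(δ i)))‖^2 := by
      intro δ; ring
    have hre : ∑ δ : Fin N → Bool,
          ‖v (Fin.cons false (fun i => !(δ i))) - v (Fin.cons true (fun i => !(δ i)))‖ ^ 2
        = ∑ δ : Fin N → Bool, ‖v (Fin.cons true δ) - v (Fin.cons false δ)‖ ^ 2 := by
      rw [mySumNegReindex (fun δ => ‖v (Fin.cons false δ) - v (Fin.cons true δ)‖ ^ 2)]
      apply Finset.sum_congr rfl
      intro δ _
      rw [norm_sub_rev]
    have hihf : ∑ δ : Fin N → Bool, ‖v (Fin.cons true δ) - v (Fin.cons true (fun i => !(δ i)))‖ ^ 2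
        ≤ S ^ 2 * ∑ δ : Fin N → Bool, ∑ δ' : Fin N → Bool,
            if Adjacent δ δ' then ‖v (Fin.cons true δ) - v (Fin.cons true δ')‖ ^ 2 else 0 :=
      ih (fun δ => v (Fin.cons true δ))
    have hihg : ∑ δ : Fin N → Bool, ‖v (Fin.cons false δ) - v (Fin.cons false (fun i => !(δ i)))‖ ^ 2
        ≤ S ^ 2 * ∑ δ : Fin N → Bool, ∑ δ' : Fin N → Bool,
            if Adjacent δ δ' then ‖v (Fin.cons false δ) - v (Fin.cons false δ')‖ ^ 2 else 0 :=
      ih (fun δ => v (Fin.cons false δ))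
    calc _ ≤ _ := hstep
    _ = _ := by
      simp only [hsplit]
      rw [Finset.sum_add_distrib, Finset.sum_add_distrib, Finset.sum_add_distrib,
        ← Finset.mul_sum, ← Finset.mul_sum, hre]
    _ ≤ _ := by linarith [hihf, hihg]

/-- A 2-uniformly smooth normed space with constant `S` has Enflo type 2 with constant `S`. -/
theorem stmt18 {V : Type*} [NormedAddCommGroup V] [NormedSpace ℝ V] (S : ℝ) (hS : 1 ≤ S)
    (hsmooth : ∀ v w : V, ‖(1/2 : ℝ) • (v + w)‖ ^ 2 ≥
      (1/2) * ‖v‖ ^ 2 + (1/2) * ‖w‖ ^ 2 - S ^ 2 / 4 * ‖v - w‖ ^ 2)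
    (N : ℕ) (v : (Fin N → Bool) → V) :
    ∑ ε : Fin N → Bool, ‖v ε - v (fun i => !(ε i))‖ ^ 2 ≤
      S ^ 2 * ∑ ε : Fin N → Bool, ∑ ε' : Fin N → Bool,
        if Adjacent ε ε' then ‖v ε - v ε'‖ ^ 2 else 0 := by
  have h4 : ∀ w x y z : V, ‖w - y‖^2 + ‖x - z‖^2 ≤
      S^2 * (‖w - x‖^2 + ‖y - z‖^2) + ‖w - z‖^2 + ‖x - y‖^2 := by
    have hn : ‖(1/2 : ℝ)‖ = 1/2 := by rw [Real.norm_eq_abs]; norm_num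
    have key : ∀ a b : V, ‖a + b‖^2 + ‖a - b‖^2 ≤ 2*‖a‖^2 + 2*S^2*‖b‖^2 := by
      intro a b
      have h := hsmooth (a + b) (a - b)
      have e1 : (1/2 : ℝ) • ((a + b) + (a - b)) = a := by module
      have e2 : (a + b) - (a - b) = (2:ℝ) • b := by module
      rw [e1, e2, norm_smul] at h
      simp only [Real.norm_ofNat] at h
      nlinarith [h]
    intro w x y z
    set a : V := (1/2 : ℝ) • ((w - z) + (x - y)) with ha_def
    set b : V := (1/2 : ℝ) • ((w - x) + (z - y)) with hb_def
    have hab : a + b = w - y := by rw [ha_def, hb_def]; module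
    have hab' : a - b = x - z := by rw [ha_def, hb_def]; module
    have ha : ‖a‖ ≤ (‖w - z‖ + ‖x - y‖)/2 := by
      rw [ha_def, norm_smul, hn]
      have := norm_add_le (w - z) (x - y)
      linarith
    have hb : ‖b‖ ≤ (‖w - x‖ + ‖y - z‖)/2 := by
      rw [hb_def, norm_smul, hn]
      have h1 := norm_add_le (w - x) (z - y)
      have h2 : ‖z - y‖ = ‖y - z‖ := norm_sub_rev _ _
      linarith
    have hk := key a b
    rw [hab, hab'] at hk
    have ha2 : 2 * ‖a‖^2 ≤ ‖w - z‖^2 + ‖x - y‖^2 := by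
      nlinarith [ha, norm_nonneg a, norm_nonneg (w-z), norm_nonneg (x-y),
        sq_nonneg (‖w-z‖ - ‖x-y‖)]
    have hb2 : 2 * ‖b‖^2 ≤ ‖w - x‖^2 + ‖y - z‖^2 := by
      nlinarith [hb, norm_nonneg b, norm_nonneg (w-x), norm_nonneg (y-z),
        sq_nonneg (‖w-x‖ - ‖y-z‖)]
    have hb3 := mul_le_mul_of_nonneg_left hb2 (sq_nonneg S)
    nlinarith [hk, ha2, hb3, sq_nonneg S]
  exact myEnfloAux S h4 N v
end
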